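/- arXiv:1211.3868 — 4 statements merged into one kernel-verified Lean document; each statement's English description precedes it below -/
import Mathlib

section
/- Let X be a càdlàg function and c > 0. Define stopping-type times T_{u,0} = inf{s ≥ 0 : sup_{t∈[0,s]} X(t) − X(0) > c}, and recursively T_{d,k} = inf{s ≥ T_{u,k} : sup_{t∈[T_{u,k},s]} X(t) − X(s) > 2c}, T_{u,k+1} = inf{s ≥ T_{d,k} : X(s) − inf_{t∈[T_{d,k},s]} X(t) > 2c}. Then for every s > 0 there exists K < ∞ such that T_{u,K} > s or T_{d,K} > s; i.e., only finitely many of these times lie in any compact interval. -/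
open Set Filter MeasureTheory
open scoped ENNReal NNReal Topology

noncomputable section

/-- A function is càdlàg: right-continuous with left limits. -/
def Cadlag (f : ℝ → ℝ) : Prop :=
  (∀ t : ℝ, Tendsto f (nhdsWithin t (Ici t)) (nhds (f t))) ∧
  (∀ t : ℝ, ∃ l : ℝ, Tendsto f (nhdsWithin t (Iio t)) (nhds l))

/-- Jump of `f` at `s`. -/
def jumpAt (f : ℝ → ℝ) (s : ℝ) : ℝ := f s - Function.leftLim f s

def supOn (f : ℝ → ℝ) (a b : ℝ) : ℝ := sSup (f '' Icc a b)
def infOn (f : ℝ → ℝ) (a b : ℝ) : ℝ := sInf (f '' Icc a b)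

def TuZero (X : ℝ → ℝ) (c : ℝ) : ℝ≥0∞ :=
  sInf {u | ∃ s : ℝ, 0 ≤ s ∧ u = ENNReal.ofReal s ∧ supOn X 0 s - X 0 > c}

def TdIni (X : ℝ → ℝ) (c : ℝ) : ℝ≥0∞ :=
  sInf {u | ∃ s : ℝ, 0 ≤ s ∧ u = ENNReal.ofReal s ∧ X 0 - infOn X 0 s > c}

def nextTd (X : ℝ → ℝ) (c : ℝ) (a : ℝ≥0∞) : ℝ≥0∞ :=
  sInf {u | ∃ s : ℝ, 0 ≤ s ∧ a ≤ ENNReal.ofReal s ∧ u = ENNReal.ofReal s ∧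
    supOn X a.toReal s - X s > 2 * c}

def nextTu (X : ℝ → ℝ) (c : ℝ) (a : ℝ≥0∞) : ℝ≥0∞ :=
  sInf {u | ∃ s : ℝ, 0 ≤ s ∧ a ≤ ENNReal.ofReal s ∧ u = ENNReal.ofReal s ∧
    X s - infOn X a.toReal s > 2 * c}

def TuTd (X : ℝ → ℝ) (c : ℝ) : ℕ → ℝ≥0∞ × ℝ≥0∞
  | 0 => (TuZero X c, nextTd X c (TuZero X c))
  | (n + 1) =>
      let tu := nextTu X c (TuTd X c n).2
      (tu, nextTd X c tu)

def Tu (X : ℝ → ℝ) (c : ℝ) (n : ℕ) : ℝ≥0∞ := (TuTd X c n).1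
def Td (X : ℝ → ℝ) (c : ℝ) (n : ℕ) : ℝ≥0∞ := (TuTd X c n).2

open Classical in
/-- The finite variation approximation `X^c` from the paper's construction. -/
def Xc (X : ℝ → ℝ) (c : ℝ) (s : ℝ) : ℝ :=
  if ENNReal.ofReal s < Tu X c 0 then X 0
  else if h : ∃ k, Tu X c k ≤ ENNReal.ofReal s ∧ ENNReal.ofReal s < Td X c k then
    supOn X (Tu X c (Nat.find h)).toReal s - c
  else if h' : ∃ k, Td X c k ≤ ENNReal.ofReal s ∧ ENNReal.ofReal s < Tu X c (k + 1) then
    infOn X (Td X c (Nat.find h')).toReal s + c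
  else 0

/-- Truncated variation at level `c` on `[0, T]`. -/
def TVtrunc (f : ℝ → ℝ) (c T : ℝ) : ℝ≥0∞ :=
  ⨆ (n : ℕ) (t : ℕ → ℝ) (_ : Monotone t) (_ : ∀ i, t i ∈ Icc (0 : ℝ) T),
    ∑ i ∈ Finset.range n, ENNReal.ofReal (|f (t (i + 1)) - f (t i)| - c)

/-- Upward truncated variation at level `c` on `[0, T]`. -/
def UTVtrunc (f : ℝ → ℝ) (c T : ℝ) : ℝ≥0∞ :=
  ⨆ (n : ℕ) (t : ℕ → ℝ) (_ : Monotone t) (_ : ∀ i, t i ∈ Icc (0 : ℝ) T),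
    ∑ i ∈ Finset.range n, ENNReal.ofReal (f (t (i + 1)) - f (t i) - c)

/-- Downward truncated variation at level `c` on `[0, T]`. -/
def DTVtrunc (f : ℝ → ℝ) (c T : ℝ) : ℝ≥0∞ :=
  ⨆ (n : ℕ) (t : ℕ → ℝ) (_ : Monotone t) (_ : ∀ i, t i ∈ Icc (0 : ℝ) T),
    ∑ i ∈ Finset.range n, ENNReal.ofReal (f (t i) - f (t (i + 1)) - c)

/-- Left-endpoint Riemann–Stieltjes sum of `f` against `g` over the dyadic
partition of `[0, t]` with `2 ^ n` pieces. -/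
def RSsum (f g : ℝ → ℝ) (t : ℝ) (n : ℕ) : ℝ :=
  ∑ i ∈ Finset.range (2 ^ n),
    f (t * i / 2 ^ n) * (g (t * (i + 1) / 2 ^ n) - g (t * i / 2 ^ n))

/-- Pathwise Lebesgue–Stieltjes integral `∫_0^t f_- dg`, realized as the limit of
left-endpoint Riemann–Stieltjes sums along dyadic partitions. -/
def LSint (f g : ℝ → ℝ) (t : ℝ) : ℝ := limUnder atTop (fun n => RSsum f g t n)

/-- Discrete covariation sums along dyadic partitions. -/
def QVsum (f g : ℝ → ℝ) (t : ℝ) (n : ℕ) : ℝ :=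
  ∑ i ∈ Finset.range (2 ^ n),
    (f (t * (i + 1) / 2 ^ n) - f (t * i / 2 ^ n)) *
      (g (t * (i + 1) / 2 ^ n) - g (t * i / 2 ^ n))

/-- Sum of products of jumps `∑_{0 < s ≤ t} Δf Δg`. -/
def jumpSum (f g : ℝ → ℝ) (t : ℝ) : ℝ :=
  ∑' s : ℝ, Set.indicator (Ioc (0 : ℝ) t) (fun u => jumpAt f u * jumpAt g u) s

/-- A local martingale: there is a localizing sequence of stopping times. -/
def IsLocalMartingale {Ω : Type*} [m : MeasurableSpace Ω] (F : Filtration ℝ m)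
    (P : Measure Ω) (M : ℝ → Ω → ℝ) : Prop :=
  ∃ τ : ℕ → Ω → ℝ, (∀ n, IsStoppingTime F (fun ω => ((τ n ω : ℝ) : WithTop ℝ))) ∧
    (∀ ω, Tendsto (fun n => τ n ω) atTop atTop) ∧
    ∀ n, Martingale (stoppedProcess M (fun ω => ((τ n ω : ℝ) : WithTop ℝ))) F P

/-- A (càdlàg) semimartingale: adapted, càdlàg, and decomposable as a local
martingale plus an adapted càdlàg process of locally finite variation. -/
def IsSemimartingale {Ω : Type*} [m : MeasurableSpace Ω] (F : Filtration ℝ m)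
    (P : Measure Ω) (X : ℝ → Ω → ℝ) : Prop :=
  Adapted F X ∧ (∀ ω, Cadlag fun t => X t ω) ∧
  ∃ M A : ℝ → Ω → ℝ, (∀ t ω, X t ω = M t ω + A t ω) ∧
    IsLocalMartingale F P M ∧ Adapted F A ∧ (∀ ω, Cadlag fun t => A t ω) ∧
    (∀ ω, ∀ T > (0 : ℝ), eVariationOn (fun t => A t ω) (Icc 0 T) < ⊤)

/-- The filtration satisfies the usual hypotheses w.r.t. `P`:
right-continuity and completeness. -/
def UsualConditions {Ω : Type*} [m : MeasurableSpace Ω] (F : Filtration ℝ m)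
    (P : Measure Ω) : Prop :=
  (∀ t : ℝ, F t = ⨅ (s : ℝ) (_ : t < s), F s) ∧
  (∀ t : ℝ, ∀ s : Set Ω, P s = 0 → MeasurableSet[F t] s)

/-- Uniform convergence on compacts in probability, as `c ↓ 0`. -/
def UCP {Ω : Type*} [m : MeasurableSpace Ω] (P : Measure Ω)
    (Fc : ℝ → ℝ → Ω → ℝ) (G : ℝ → Ω → ℝ) : Prop :=
  ∀ T > (0 : ℝ), ∀ ε > (0 : ℝ),
    Tendsto (fun c => P {ω | ε ≤ ⨆ t : Icc (0 : ℝ) T, |Fc c t ω - G t ω|})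
      (nhdsWithin 0 (Ioi 0)) (nhds 0)

/-- Standard Brownian motion started at `0`. -/
def IsStandardBM {Ω : Type*} [m : MeasurableSpace Ω] (P : Measure Ω)
    (B : ℝ → Ω → ℝ) : Prop :=
  (∀ ω, B 0 ω = 0) ∧ (∀ ω, Continuous fun t => B t ω) ∧
  (∀ t, Measurable (B t)) ∧
  (∀ s t : ℝ, 0 ≤ s → s ≤ t →
    P.map (fun ω => B t ω - B s ω) = ProbabilityTheory.gaussianReal 0 ((t - s).toNNReal)) ∧
  (∀ n : ℕ, ∀ t : Fin (n + 1) → ℝ, Monotone t → (∀ i, 0 ≤ t i) →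
    ProbabilityTheory.iIndepFun
      (fun (i : Fin n) ω => B (t i.succ) ω - B (t i.castSucc) ω) P)

/-- Natural σ-algebra of the process `B` up to time `t`. -/
def naturalSigma {Ω : Type*} (B : ℝ → Ω → ℝ) (t : ℝ) : MeasurableSpace Ω :=
  ⨆ s ∈ Iic t, MeasurableSpace.comap (B s) inferInstance


lemma le_nextTd (X : ℝ → ℝ) (c : ℝ) (a : ℝ≥0∞) : a ≤ nextTd X c a := by
  refine le_sInf ?_
  rintro u ⟨t, ht0, hat, rfl, _⟩
  exact hat

lemma le_nextTu (X : ℝ → ℝ) (c : ℝ) (a : ℝ≥0∞) : a ≤ nextTu X c a := by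
  refine le_sInf ?_
  rintro u ⟨t, ht0, hat, rfl, _⟩
  exact hat

lemma lt_nextTd (X : ℝ → ℝ) (hX : Cadlag X) {c : ℝ} (hc : 0 < c) {a : ℝ≥0∞} (ha : a ≠ ∞) :
    a < nextTd X c a := by
  obtain ⟨δ, hδ, H⟩ := Metric.tendsto_nhdsWithin_nhds.mp (hX.1 a.toReal) c hc
  have key : a + ENNReal.ofReal δ ≤ nextTd X c a := by
    refine le_sInf ?_
    rintro u ⟨t, ht0, hat, rfl, hcond⟩
    by_contra hlt
    push_neg at hlt
    have ha' : a = ENNReal.ofReal a.toReal := (ENNReal.ofReal_toReal ha).symm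
    have h1 : a.toReal ≤ t := by
      rw [ha', ENNReal.ofReal_le_ofReal_iff ht0] at hat; exact hat
    have h2 : t < a.toReal + δ := by
      rw [ha', ← ENNReal.ofReal_add ENNReal.toReal_nonneg hδ.le] at hlt
      exact (ENNReal.ofReal_lt_ofReal_iff (by positivity)).mp hlt
    have hb : ∀ r ∈ Icc a.toReal t, |X r - X a.toReal| < c := by
      intro r hr
      have hd : dist r a.toReal < δ := by
        rw [Real.dist_eq, abs_of_nonneg (sub_nonneg.mpr hr.1)]
        have := hr.2; linarith
      have := H (mem_Ici.mpr hr.1) hd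
      rwa [Real.dist_eq] at this
    have hsup : supOn X a.toReal t ≤ X a.toReal + c := by
      refine csSup_le ⟨X a.toReal, ⟨a.toReal, ⟨le_refl _, h1⟩, rfl⟩⟩ ?_
      rintro x ⟨r, hr, rfl⟩
      linarith [abs_lt.mp (hb r hr)]
    have hXt : X a.toReal - c < X t := by
      linarith [abs_lt.mp (hb t ⟨h1, le_refl _⟩)]
    simp only [gt_iff_lt] at hcond
    linarith
  refine lt_of_lt_of_le ?_ key
  exact ENNReal.lt_add_right ha (ne_of_gt (ENNReal.ofReal_pos.mpr hδ))

lemma lt_nextTu (X : ℝ → ℝ) (hX : Cadlag X) {c : ℝ} (hc : 0 < c) {a : ℝ≥0∞} (ha : a ≠ ∞) :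
    a < nextTu X c a := by
  obtain ⟨δ, hδ, H⟩ := Metric.tendsto_nhdsWithin_nhds.mp (hX.1 a.toReal) c hc
  have key : a + ENNReal.ofReal δ ≤ nextTu X c a := by
    refine le_sInf ?_
    rintro u ⟨t, ht0, hat, rfl, hcond⟩
    by_contra hlt
    push_neg at hlt
    have ha' : a = ENNReal.ofReal a.toReal := (ENNReal.ofReal_toReal ha).symm
    have h1 : a.toReal ≤ t := by
      rw [ha', ENNReal.ofReal_le_ofReal_iff ht0] at hat; exact hat
    have h2 : t < a.toReal + δ := by
      rw [ha', ← ENNReal.ofReal_add ENNReal.toReal_nonneg hδ.le] at hlt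
      exact (ENNReal.ofReal_lt_ofReal_iff (by positivity)).mp hlt
    have hb : ∀ r ∈ Icc a.toReal t, |X r - X a.toReal| < c := by
      intro r hr
      have hd : dist r a.toReal < δ := by
        rw [Real.dist_eq, abs_of_nonneg (sub_nonneg.mpr hr.1)]
        have := hr.2; linarith
      have := H (mem_Ici.mpr hr.1) hd
      rwa [Real.dist_eq] at this
    have hinf : X a.toReal - c ≤ infOn X a.toReal t := by
      refine le_csInf ⟨X a.toReal, ⟨a.toReal, ⟨le_refl _, h1⟩, rfl⟩⟩ ?_
      rintro x ⟨r, hr, rfl⟩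
      linarith [abs_lt.mp (hb r hr)]
    have hXt : X t < X a.toReal + c := by
      linarith [abs_lt.mp (hb t ⟨h1, le_refl _⟩)]
    simp only [gt_iff_lt] at hcond
    linarith
  refine lt_of_lt_of_le ?_ key
  exact ENNReal.lt_add_right ha (ne_of_gt (ENNReal.ofReal_pos.mpr hδ))

lemma Td_eq_nextTd (X : ℝ → ℝ) (c : ℝ) (n : ℕ) : Td X c n = nextTd X c (Tu X c n) := by
  cases n <;> rfl

lemma Tu_succ_eq (X : ℝ → ℝ) (c : ℝ) (n : ℕ) : Tu X c (n + 1) = nextTu X c (Td X c n) := rfl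

/-- only finitely many of the times `T_{u,k}, T_{d,k}` lie in any
compact interval: for every `s > 0` there is `K` with `T_{u,K} > s` or `T_{d,K} > s`. -/
theorem stmt_1 (X : ℝ → ℝ) (hX : Cadlag X) (c : ℝ) (hc : 0 < c) (s : ℝ) (hs : 0 < s) :
    ∃ K : ℕ, ENNReal.ofReal s < Tu X c K ∨ ENNReal.ofReal s < Td X c K := by
  by_contra hcon
  push_neg at hcon
  have hSne : ENNReal.ofReal s ≠ ∞ := ENNReal.ofReal_ne_top
  have hTune : ∀ K, Tu X c K ≠ ∞ := fun K => ne_top_of_le_ne_top hSne (hcon K).1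
  have hTdne : ∀ K, Td X c K ≠ ∞ := fun K => ne_top_of_le_ne_top hSne (hcon K).2
  have hTuTd : ∀ K, Tu X c K < Td X c K := fun K =>
    (Td_eq_nextTd X c K) ▸ lt_nextTd X hX hc (hTune K)
  have hTdTu : ∀ K, Td X c K < Tu X c (K + 1) := fun K =>
    (Tu_succ_eq X c K) ▸ lt_nextTu X hX hc (hTdne K)
  set L : ℝ≥0∞ := ⨆ K, Td X c K with hLdef
  have hLS : L ≤ ENNReal.ofReal s := iSup_le fun K => (hcon K).2
  have hLne : L ≠ ∞ := ne_top_of_le_ne_top hSne hLS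
  have hL0 : 0 < L := lt_of_lt_of_le (lt_of_le_of_lt zero_le (hTuTd 0)) (le_iSup _ 0)
  obtain ⟨l, hl⟩ := hX.2 L.toReal
  obtain ⟨δ, hδ, H⟩ := Metric.tendsto_nhdsWithin_nhds.mp hl c hc
  have hexk : ∃ k, L - ENNReal.ofReal δ < Td X c k := by
    by_contra hk
    push_neg at hk
    have h1 : L ≤ L - ENNReal.ofReal δ := iSup_le hk
    have h2 : L - ENNReal.ofReal δ < L :=
      ENNReal.sub_lt_self hLne hL0.ne' (ne_of_gt (ENNReal.ofReal_pos.mpr hδ))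
    exact absurd h1 (not_le.mpr h2)
  obtain ⟨k, hk⟩ := hexk
  set j := k + 1 with hjdef
  have hj1 : L - ENNReal.ofReal δ < Tu X c j := hk.trans (hTdTu k)
  have hjpos : 0 < Tu X c j :=
    lt_trans (lt_of_le_of_lt zero_le (hTuTd k)) (hTdTu k)
  have hjlt : Td X c j < L :=
    lt_of_lt_of_le (lt_trans (hTdTu j) (hTuTd (j + 1))) (le_iSup _ (j + 1))
  rw [Td_eq_nextTd, nextTd] at hjlt
  obtain ⟨u, hu, hult⟩ := sInf_lt_iff.mp hjlt
  obtain ⟨s', hs'0, hles', rfl, hcond⟩ := hu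
  have ha'pos : 0 < (Tu X c j).toReal := ENNReal.toReal_pos hjpos.ne' (hTune j)
  have h1 : (Tu X c j).toReal ≤ s' := by
    have := ENNReal.toReal_mono ENNReal.ofReal_ne_top hles'
    rwa [ENNReal.toReal_ofReal hs'0] at this
  have h2 : s' < L.toReal := by
    have := ENNReal.toReal_strict_mono hLne hult
    rwa [ENNReal.toReal_ofReal hs'0] at this
  have h3 : L.toReal - δ < (Tu X c j).toReal := by
    rcases le_or_gt L.toReal δ with hcase | hcase
    · linarith
    · have hle : ENNReal.ofReal δ ≤ L := by
        rw [← ENNReal.ofReal_toReal hLne]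
        exact ENNReal.ofReal_le_ofReal hcase.le
      have := ENNReal.toReal_strict_mono (hTune j) hj1
      rwa [ENNReal.toReal_sub_of_le hle hLne, ENNReal.toReal_ofReal hδ.le] at this
  have hb : ∀ t ∈ Icc (Tu X c j).toReal s', |X t - l| < c := by
    intro t ht
    have ht1 : t ∈ Iio L.toReal := lt_of_le_of_lt ht.2 h2
    have hd : dist t L.toReal < δ := by
      rw [Real.dist_eq, abs_of_nonpos (by linarith [ht.2] : t - L.toReal ≤ 0)]
      linarith [ht.1]
    have := H ht1 hd
    rwa [Real.dist_eq] at this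
  have hsup : supOn X (Tu X c j).toReal s' ≤ l + c := by
    refine csSup_le ⟨X (Tu X c j).toReal, ⟨(Tu X c j).toReal, ⟨le_refl _, h1⟩, rfl⟩⟩ ?_
    rintro x ⟨t, ht, rfl⟩
    linarith [abs_lt.mp (hb t ht)]
  have hXs : l - c < X s' := by
    linarith [abs_lt.mp (hb s' ⟨h1, le_refl _⟩)]
  simp only [gt_iff_lt] at hcond
  linarith

end
end

section
/- For any functions f, g : [0,T] → ℝ with |f(t) − g(t)| ≤ c for all t, the truncated variation of f at level 2c is at most the total variation of g: TV^{2c}(f, T) ≤ TV(g, T), where TV^{2c}(f,T) = sup_n sup_{0≤t_1<...<t_n≤T} Σ max{|f(t_i) − f(t_{i−1})| − 2c, 0}. -/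
open Set Filter MeasureTheory
open scoped ENNReal NNReal Topology

noncomputable section

/-- if `g` stays uniformly within `c` of `f` on `[0,T]`, then the
truncated variation of `f` at level `2c` is bounded by the total variation of `g`. -/
theorem stmt_5 (f g : ℝ → ℝ) (c T : ℝ) (hc : 0 < c)
    (hfg : ∀ t ∈ Icc (0 : ℝ) T, |f t - g t| ≤ c) :
    TVtrunc f (2 * c) T ≤ eVariationOn g (Icc 0 T) := by
  refine iSup_le fun n => iSup_le fun t => iSup_le fun ht => iSup_le fun hmem => ?_
  calc ∑ i ∈ Finset.range n, ENNReal.ofReal (|f (t (i + 1)) - f (t i)| - 2 * c)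
      ≤ ∑ i ∈ Finset.range n, edist (g (t (i + 1))) (g (t i)) := by
        refine Finset.sum_le_sum fun i _ => ?_
        rw [edist_dist, Real.dist_eq]
        apply ENNReal.ofReal_le_ofReal
        have h1 := abs_le.mp (hfg _ (hmem (i + 1)))
        have h2 := abs_le.mp (hfg _ (hmem i))
        have hG := le_abs_self (g (t (i + 1)) - g (t i))
        have hG' := neg_abs_le (g (t (i + 1)) - g (t i))
        rcases abs_cases (f (t (i + 1)) - f (t i)) with ⟨he, _⟩ | ⟨he, _⟩ <;> linarith
    _ ≤ eVariationOn g (Icc 0 T) := eVariationOn.sum_le (f := g) (n := n) ht hmem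

end
end

section
/- For the process X^c constructed in the paper, its total variation on [0,T] satisfies the two-sided estimate TV^{2c}(X, T) ≤ TV(X^c, T) ≤ TV^{2c}(X, T) + 2c. -/
open Set Filter MeasureTheory
open scoped ENNReal NNReal Topology

noncomputable section

namespace Stmt6Aux

open ENNReal

variable {X : ℝ → ℝ} {c : ℝ}

lemma cadlag_bounded (hX : Cadlag X) (a b : ℝ) : ∃ M, ∀ u ∈ Icc a b, |X u| ≤ M := by
  have loc : ∀ t : ℝ, ∃ M : ℝ, ∃ d1 > (0:ℝ), ∃ d2 > (0:ℝ),
      ∀ u ∈ Ioo (t - d1) (t + d2), |X u| ≤ M := by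
    intro t
    obtain ⟨d2, hd2, H2⟩ := Metric.tendsto_nhdsWithin_nhds.mp (hX.1 t) 1 one_pos
    obtain ⟨l, hl⟩ := hX.2 t
    obtain ⟨d1, hd1, H1⟩ := Metric.tendsto_nhdsWithin_nhds.mp hl 1 one_pos
    refine ⟨max (|X t| + 1) (|l| + 1), d1, hd1, d2, hd2, ?_⟩
    rintro u ⟨hu1, hu2⟩
    rcases le_or_gt t u with h | h
    · have := H2 (show u ∈ Ici t from h) (by rw [Real.dist_eq, abs_of_nonneg (by linarith)]; linarith)
      rw [Real.dist_eq] at this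
      calc |X u| ≤ |X t| + |X u - X t| := by
            have := abs_sub_abs_le_abs_sub (X u) (X t); linarith [abs_nonneg (X u - X t)]
        _ ≤ max (|X t| + 1) (|l| + 1) := le_max_of_le_left (by linarith)
    · have := H1 h (by rw [Real.dist_eq, abs_of_nonpos (by linarith)]; linarith)
      rw [Real.dist_eq] at this
      calc |X u| ≤ |l| + |X u - l| := by
            have := abs_sub_abs_le_abs_sub (X u) l; linarith [abs_nonneg (X u - l)]
        _ ≤ max (|X t| + 1) (|l| + 1) := le_max_of_le_right (by linarith)
  choose M d1 hd1 d2 hd2 hM using loc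
  have hcov : Icc a b ⊆ ⋃ t : ℝ, Ioo (t - d1 t) (t + d2 t) := by
    intro x _
    exact mem_iUnion.2 ⟨x, by constructor <;> [linarith [hd1 x]; linarith [hd2 x]]⟩
  obtain ⟨F, hF⟩ := isCompact_Icc.elim_finite_subcover _ (fun t => isOpen_Ioo) hcov
  rcases F.eq_empty_or_nonempty with rfl | hFne
  · refine ⟨0, fun u hu => ?_⟩
    have := hF hu; simp at this
  · refine ⟨(F.image M).max' (hFne.image M), fun u hu => ?_⟩
    obtain ⟨t, htF, htu⟩ := mem_iUnion₂.mp (hF hu)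
    exact le_trans (hM t u htu) (Finset.le_max' _ _ (Finset.mem_image_of_mem M htF))

lemma bddAbove_img (hX : Cadlag X) (a b : ℝ) : BddAbove (X '' Icc a b) := by
  obtain ⟨M, hM⟩ := cadlag_bounded hX a b
  exact ⟨M, by rintro y ⟨u, hu, rfl⟩; exact (abs_le.mp (hM u hu)).2⟩

lemma bddBelow_img (hX : Cadlag X) (a b : ℝ) : BddBelow (X '' Icc a b) := by
  obtain ⟨M, hM⟩ := cadlag_bounded hX a b
  exact ⟨-M, by rintro y ⟨u, hu, rfl⟩; exact (abs_le.mp (hM u hu)).1⟩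

lemma le_supOn (hX : Cadlag X) {a s u : ℝ} (h : u ∈ Icc a s) : X u ≤ supOn X a s :=
  le_csSup (bddAbove_img hX a s) ⟨u, h, rfl⟩

lemma supOn_le {a s m : ℝ} (h : a ≤ s) (hm : ∀ u ∈ Icc a s, X u ≤ m) : supOn X a s ≤ m :=
  csSup_le ⟨X a, a, ⟨le_rfl, h⟩, rfl⟩ (by rintro y ⟨u, hu, rfl⟩; exact hm u hu)

lemma supOn_self (a : ℝ) : supOn X a a = X a := by
  simp [supOn, Icc_self]

lemma supOn_mono (hX : Cadlag X) {a s t : ℝ} (h1 : a ≤ s) (h2 : s ≤ t) :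
    supOn X a s ≤ supOn X a t :=
  csSup_le_csSup (bddAbove_img hX a t) ⟨X a, a, ⟨le_rfl, h1⟩, rfl⟩
    (image_mono (Icc_subset_Icc le_rfl h2))

lemma infOn_le (hX : Cadlag X) {a s u : ℝ} (h : u ∈ Icc a s) : infOn X a s ≤ X u :=
  csInf_le (bddBelow_img hX a s) ⟨u, h, rfl⟩

lemma le_infOn {a s m : ℝ} (h : a ≤ s) (hm : ∀ u ∈ Icc a s, m ≤ X u) : m ≤ infOn X a s :=
  le_csInf ⟨X a, a, ⟨le_rfl, h⟩, rfl⟩ (by rintro y ⟨u, hu, rfl⟩; exact hm u hu)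

lemma infOn_self (a : ℝ) : infOn X a a = X a := by
  simp [infOn, Icc_self]

lemma infOn_anti (hX : Cadlag X) {a s t : ℝ} (h1 : a ≤ s) (h2 : s ≤ t) :
    infOn X a t ≤ infOn X a s :=
  csInf_le_csInf (bddBelow_img hX a t) ⟨X a, a, ⟨le_rfl, h1⟩, rfl⟩
    (image_mono (Icc_subset_Icc le_rfl h2))

/-- quantitative right continuity -/
lemma rc (hX : Cadlag X) (t : ℝ) {ε : ℝ} (hε : 0 < ε) :
    ∃ δ > (0:ℝ), ∀ u, t ≤ u → u < t + δ → |X u - X t| < ε := by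
  obtain ⟨δ, hδ, H⟩ := Metric.tendsto_nhdsWithin_nhds.mp (hX.1 t) ε hε
  refine ⟨δ, hδ, fun u h1 h2 => ?_⟩
  have := H (x := u) h1 (by rw [Real.dist_eq, abs_of_nonneg (by linarith)]; linarith)
  rwa [Real.dist_eq] at this

lemma supOn_window (hX : Cadlag X) {a t s ε : ℝ} (hat : a ≤ t) (hts : t ≤ s)
    (hb : ∀ u, t ≤ u → u ≤ s → X u ≤ X t + ε) : supOn X a s ≤ supOn X a t + ε := by
  have hε : 0 ≤ ε := by have := hb t le_rfl hts; linarith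
  refine supOn_le (hat.trans hts) fun u hu => ?_
  rcases le_total u t with h | h
  · exact le_trans (le_supOn hX ⟨hu.1, h⟩) (by linarith)
  · exact le_trans (hb u h hu.2) (by have := le_supOn hX (a := a) (s := t) ⟨hat, le_rfl⟩; linarith)

lemma infOn_window (hX : Cadlag X) {a t s ε : ℝ} (hat : a ≤ t) (hts : t ≤ s)
    (hb : ∀ u, t ≤ u → u ≤ s → X t - ε ≤ X u) : infOn X a t - ε ≤ infOn X a s := by
  have hε : 0 ≤ ε := by have := hb t le_rfl hts; linarith
  refine le_infOn (hat.trans hts) fun u hu => ?_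
  rcases le_total u t with h | h
  · exact le_trans (by linarith) (infOn_le hX (a := a) (s := t) ⟨hu.1, h⟩)
  · exact le_trans (by have := infOn_le hX (a := a) (s := t) ⟨hat, le_rfl⟩; linarith) (hb u h hu.2)

/-! ### membership/toReal helpers -/

lemma toReal_le_real {e : ℝ≥0∞} {s : ℝ} (he : e ≠ ⊤) (hs : 0 ≤ s)
    (h : e ≤ ENNReal.ofReal s) : e.toReal ≤ s := by
  have := (ENNReal.toReal_le_toReal he ENNReal.ofReal_ne_top).mpr h
  rwa [ENNReal.toReal_ofReal hs] at this

lemma real_le_toReal {e : ℝ≥0∞} {s : ℝ} (he : e ≠ ⊤) (hs : 0 ≤ s)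
    (h : ENNReal.ofReal s ≤ e) : s ≤ e.toReal := by
  have := (ENNReal.toReal_le_toReal ENNReal.ofReal_ne_top he).mpr h
  rwa [ENNReal.toReal_ofReal hs] at this

lemma nextTd_le {a : ℝ≥0∞} {s : ℝ} (hs : 0 ≤ s) (has : a ≤ ENNReal.ofReal s)
    (h : 2*c < supOn X a.toReal s - X s) : nextTd X c a ≤ ENNReal.ofReal s :=
  sInf_le ⟨s, hs, has, rfl, h⟩

lemma nextTu_le {a : ℝ≥0∞} {s : ℝ} (hs : 0 ≤ s) (has : a ≤ ENNReal.ofReal s)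
    (h : 2*c < X s - infOn X a.toReal s) : nextTu X c a ≤ ENNReal.ofReal s :=
  sInf_le ⟨s, hs, has, rfl, h⟩

lemma tuZero_le {s : ℝ} (hs : 0 ≤ s) (h : c < supOn X 0 s - X 0) :
    TuZero X c ≤ ENNReal.ofReal s := sInf_le ⟨s, hs, rfl, h⟩

lemma tdIni_le {s : ℝ} (hs : 0 ≤ s) (h : c < X 0 - infOn X 0 s) :
    TdIni X c ≤ ENNReal.ofReal s := sInf_le ⟨s, hs, rfl, h⟩

/-! ### Stopping time lemmas -/

lemma le_nextTd (a : ℝ≥0∞) : a ≤ nextTd X c a :=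
  le_sInf (by rintro u ⟨s, hs0, has, rfl, h⟩; exact has)

lemma le_nextTu (a : ℝ≥0∞) : a ≤ nextTu X c a :=
  le_sInf (by rintro u ⟨s, hs0, has, rfl, h⟩; exact has)

lemma nextTd_not_yet {a : ℝ≥0∞} {s : ℝ} (hs : 0 ≤ s) (has : a ≤ ENNReal.ofReal s)
    (h : ENNReal.ofReal s < nextTd X c a) : supOn X a.toReal s - X s ≤ 2*c := by
  by_contra hgt; push_neg at hgt
  exact absurd (nextTd_le hs has hgt) (not_le.mpr h)

lemma nextTu_not_yet {a : ℝ≥0∞} {s : ℝ} (hs : 0 ≤ s) (has : a ≤ ENNReal.ofReal s)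
    (h : ENNReal.ofReal s < nextTu X c a) : X s - infOn X a.toReal s ≤ 2*c := by
  by_contra hgt; push_neg at hgt
  exact absurd (nextTu_le hs has hgt) (not_le.mpr h)

lemma nextTd_attain (hX : Cadlag X) {a : ℝ≥0∞} (hfin : nextTd X c a ≠ ⊤) :
    2*c ≤ supOn X a.toReal (nextTd X c a).toReal - X ((nextTd X c a).toReal) := by
  set t := (nextTd X c a).toReal with ht
  have hat : a ≤ nextTd X c a := le_nextTd a
  have hafin : a ≠ ⊤ := ne_top_of_le_ne_top hfin hat
  have hta : a.toReal ≤ t := (ENNReal.toReal_le_toReal hafin hfin).mpr hat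
  have ht0 : (0:ℝ) ≤ t := ENNReal.toReal_nonneg
  by_contra hlt; push_neg at hlt
  set η := (2*c - (supOn X a.toReal t - X t))/3 with hη
  have hη0 : 0 < η := by rw [hη]; linarith
  obtain ⟨δ, hδ0, hδ⟩ := rc hX t hη0
  have key : ENNReal.ofReal (t + δ) ≤ nextTd X c a := by
    refine le_sInf ?_
    rintro u ⟨s, hs0, has, rfl, hgt⟩
    have hst : t ≤ s := by
      have h1 : nextTd X c a ≤ ENNReal.ofReal s := nextTd_le hs0 has hgt
      have h2 := (ENNReal.toReal_le_toReal hfin ENNReal.ofReal_ne_top).mpr h1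
      rwa [ENNReal.toReal_ofReal hs0] at h2
    refine ENNReal.ofReal_le_ofReal ?_
    by_contra hc2; push_neg at hc2
    obtain ⟨e1, e2⟩ := abs_lt.mp (hδ s hst hc2)
    have h2 : supOn X a.toReal s ≤ supOn X a.toReal t + η := by
      refine supOn_window hX hta hst (fun u hu1 hu2 => ?_)
      obtain ⟨f1, f2⟩ := abs_lt.mp (hδ u hu1 (lt_of_le_of_lt hu2 hc2))
      linarith
    linarith
  have h3 : ENNReal.ofReal (t + δ) ≤ ENNReal.ofReal t := by
    rw [ht, ENNReal.ofReal_toReal hfin]; exact key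
  have := (ENNReal.ofReal_le_ofReal_iff ht0).mp h3
  linarith

lemma nextTu_attain (hX : Cadlag X) {a : ℝ≥0∞} (hfin : nextTu X c a ≠ ⊤) :
    2*c ≤ X ((nextTu X c a).toReal) - infOn X a.toReal ((nextTu X c a).toReal) := by
  set t := (nextTu X c a).toReal with ht
  have hat : a ≤ nextTu X c a := le_nextTu a
  have hafin : a ≠ ⊤ := ne_top_of_le_ne_top hfin hat
  have hta : a.toReal ≤ t := (ENNReal.toReal_le_toReal hafin hfin).mpr hat
  have ht0 : (0:ℝ) ≤ t := ENNReal.toReal_nonneg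
  by_contra hlt; push_neg at hlt
  set η := (2*c - (X t - infOn X a.toReal t))/3 with hη
  have hη0 : 0 < η := by rw [hη]; linarith
  obtain ⟨δ, hδ0, hδ⟩ := rc hX t hη0
  have key : ENNReal.ofReal (t + δ) ≤ nextTu X c a := by
    refine le_sInf ?_
    rintro u ⟨s, hs0, has, rfl, hgt⟩
    have hst : t ≤ s := by
      have h1 : nextTu X c a ≤ ENNReal.ofReal s := nextTu_le hs0 has hgt
      have h2 := (ENNReal.toReal_le_toReal hfin ENNReal.ofReal_ne_top).mpr h1
      rwa [ENNReal.toReal_ofReal hs0] at h2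
    refine ENNReal.ofReal_le_ofReal ?_
    by_contra hc2; push_neg at hc2
    obtain ⟨e1, e2⟩ := abs_lt.mp (hδ s hst hc2)
    have h2 : infOn X a.toReal t - η ≤ infOn X a.toReal s := by
      refine infOn_window hX hta hst (fun u hu1 hu2 => ?_)
      obtain ⟨f1, f2⟩ := abs_lt.mp (hδ u hu1 (lt_of_le_of_lt hu2 hc2))
      linarith
    linarith
  have h3 : ENNReal.ofReal (t + δ) ≤ ENNReal.ofReal t := by
    rw [ht, ENNReal.ofReal_toReal hfin]; exact key
  have := (ENNReal.ofReal_le_ofReal_iff ht0).mp h3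
  linarith

lemma nextTd_gt (hX : Cadlag X) (hc : 0 < c) {a : ℝ≥0∞} (hfin : a ≠ ⊤) :
    a < nextTd X c a := by
  set t := a.toReal with ht
  have ht0 : (0:ℝ) ≤ t := ENNReal.toReal_nonneg
  obtain ⟨δ, hδ0, hδ⟩ := rc hX t (half_pos hc)
  have key : ENNReal.ofReal (t + δ) ≤ nextTd X c a := by
    refine le_sInf ?_
    rintro u ⟨s, hs0, has, rfl, hgt⟩
    have hst : t ≤ s := by
      have h2 := (ENNReal.toReal_le_toReal hfin ENNReal.ofReal_ne_top).mpr has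
      rwa [ENNReal.toReal_ofReal hs0] at h2
    refine ENNReal.ofReal_le_ofReal ?_
    by_contra hc2; push_neg at hc2
    obtain ⟨e1, e2⟩ := abs_lt.mp (hδ s hst hc2)
    have h2 : supOn X t s ≤ supOn X t t + c/2 := by
      refine supOn_window hX le_rfl hst (fun u hu1 hu2 => ?_)
      obtain ⟨f1, f2⟩ := abs_lt.mp (hδ u hu1 (lt_of_le_of_lt hu2 hc2))
      linarith
    rw [supOn_self] at h2
    rw [← ht] at hgt
    linarith
  calc a = ENNReal.ofReal t := (ENNReal.ofReal_toReal hfin).symm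
    _ < ENNReal.ofReal (t + δ) := by
        rw [ENNReal.ofReal_lt_ofReal_iff_of_nonneg ht0]; linarith
    _ ≤ nextTd X c a := key

lemma nextTu_gt (hX : Cadlag X) (hc : 0 < c) {a : ℝ≥0∞} (hfin : a ≠ ⊤) :
    a < nextTu X c a := by
  set t := a.toReal with ht
  have ht0 : (0:ℝ) ≤ t := ENNReal.toReal_nonneg
  obtain ⟨δ, hδ0, hδ⟩ := rc hX t (half_pos hc)
  have key : ENNReal.ofReal (t + δ) ≤ nextTu X c a := by
    refine le_sInf ?_
    rintro u ⟨s, hs0, has, rfl, hgt⟩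
    have hst : t ≤ s := by
      have h2 := (ENNReal.toReal_le_toReal hfin ENNReal.ofReal_ne_top).mpr has
      rwa [ENNReal.toReal_ofReal hs0] at h2
    refine ENNReal.ofReal_le_ofReal ?_
    by_contra hc2; push_neg at hc2
    obtain ⟨e1, e2⟩ := abs_lt.mp (hδ s hst hc2)
    have h2 : infOn X t t - c/2 ≤ infOn X t s := by
      refine infOn_window hX le_rfl hst (fun u hu1 hu2 => ?_)
      obtain ⟨f1, f2⟩ := abs_lt.mp (hδ u hu1 (lt_of_le_of_lt hu2 hc2))
      linarith
    rw [infOn_self] at h2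
    rw [← ht] at hgt
    linarith
  calc a = ENNReal.ofReal t := (ENNReal.ofReal_toReal hfin).symm
    _ < ENNReal.ofReal (t + δ) := by
        rw [ENNReal.ofReal_lt_ofReal_iff_of_nonneg ht0]; linarith
    _ ≤ nextTu X c a := key

/-! ### Sequence lemmas -/

lemma Td_eq (k : ℕ) : Td X c k = nextTd X c (Tu X c k) := by cases k <;> rfl

lemma Tu_succ_eq (k : ℕ) : Tu X c (k+1) = nextTu X c (Td X c k) := rfl

lemma Tu_le_Td (k : ℕ) : Tu X c k ≤ Td X c k := by rw [Td_eq]; exact le_nextTd _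

lemma Td_le_Tu_succ (k : ℕ) : Td X c k ≤ Tu X c (k+1) := le_nextTu _

lemma Tu_mono : Monotone (Tu X c) :=
  monotone_nat_of_le_succ fun k => (Tu_le_Td k).trans (Td_le_Tu_succ k)

lemma Tu_lt_Td (hX : Cadlag X) (hc : 0 < c) {k : ℕ} (hfin : Tu X c k ≠ ⊤) :
    Tu X c k < Td X c k := by rw [Td_eq]; exact nextTd_gt hX hc hfin

lemma Td_lt_Tu_succ (hX : Cadlag X) (hc : 0 < c) {k : ℕ} (hfin : Td X c k ≠ ⊤) :
    Td X c k < Tu X c (k+1) := nextTu_gt hX hc hfin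

lemma Td_attain (hX : Cadlag X) {k : ℕ} (hfin : Td X c k ≠ ⊤) :
    2*c ≤ supOn X (Tu X c k).toReal (Td X c k).toReal - X ((Td X c k).toReal) := by
  have h := nextTd_attain (c := c) hX (a := Tu X c k) (by rw [← Td_eq]; exact hfin)
  rwa [← Td_eq] at h

lemma Tu_succ_attain (hX : Cadlag X) {k : ℕ} (hfin : Tu X c (k+1) ≠ ⊤) :
    2*c ≤ X ((Tu X c (k+1)).toReal) - infOn X (Td X c k).toReal ((Tu X c (k+1)).toReal) := by
  have h := nextTu_attain (c := c) hX (a := Td X c k) (by rw [← Tu_succ_eq]; exact hfin)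
  rwa [← Tu_succ_eq] at h

lemma Td_not_yet {k : ℕ} {s : ℝ} (hs : 0 ≤ s) (has : Tu X c k ≤ ENNReal.ofReal s)
    (h : ENNReal.ofReal s < Td X c k) : supOn X (Tu X c k).toReal s - X s ≤ 2*c := by
  refine nextTd_not_yet hs has ?_
  rwa [← Td_eq]

lemma Tu_succ_not_yet {k : ℕ} {s : ℝ} (hs : 0 ≤ s) (has : Td X c k ≤ ENNReal.ofReal s)
    (h : ENNReal.ofReal s < Tu X c (k+1)) : X s - infOn X (Td X c k).toReal s ≤ 2*c :=
  nextTu_not_yet hs has h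

/-! ### initial time lemmas -/

lemma tuZero_not_yet {s : ℝ} (hs : 0 ≤ s) (h : ENNReal.ofReal s < TuZero X c) :
    supOn X 0 s - X 0 ≤ c := by
  by_contra hgt; push_neg at hgt
  exact absurd (tuZero_le hs hgt) (not_le.mpr h)

lemma tdIni_not_yet {s : ℝ} (hs : 0 ≤ s) (h : ENNReal.ofReal s < TdIni X c) :
    X 0 - infOn X 0 s ≤ c := by
  by_contra hgt; push_neg at hgt
  exact absurd (tdIni_le hs hgt) (not_le.mpr h)

lemma tuZero_attain (hX : Cadlag X) (hc : 0 < c) (hfin : TuZero X c ≠ ⊤) :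
    X 0 + c ≤ X ((TuZero X c).toReal) := by
  have ht0 : (0:ℝ) ≤ (TuZero X c).toReal := ENNReal.toReal_nonneg
  by_cases hcase : ∃ s, 0 ≤ s ∧ s ≤ (TuZero X c).toReal ∧ X 0 + c < X s
  · obtain ⟨s, hs0, hst, hXs⟩ := hcase
    have hsup : c < supOn X 0 s - X 0 := by
      have := le_supOn hX (a := 0) (s := s) ⟨hs0, le_rfl⟩
      linarith
    have h1 : TuZero X c ≤ ENNReal.ofReal s := tuZero_le hs0 hsup
    have h2 : (TuZero X c).toReal ≤ s := toReal_le_real hfin hs0 h1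
    have : s = (TuZero X c).toReal := le_antisymm hst h2
    rw [← this]; linarith
  · push_neg at hcase
    by_contra hlt; push_neg at hlt
    have hε0 : 0 < X 0 + c - X ((TuZero X c).toReal) := by linarith
    obtain ⟨δ, hδ0, hδ⟩ := rc hX ((TuZero X c).toReal) hε0
    have hlt2 : TuZero X c < ENNReal.ofReal ((TuZero X c).toReal + δ) := by
      conv_lhs => rw [← ENNReal.ofReal_toReal hfin]
      rw [ENNReal.ofReal_lt_ofReal_iff_of_nonneg ht0]; linarith
    obtain ⟨u, hu, hult⟩ := sInf_lt_iff.mp hlt2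
    obtain ⟨s, hs0, rfl, hgt⟩ := hu
    have hst : (TuZero X c).toReal ≤ s := toReal_le_real hfin hs0 (tuZero_le hs0 hgt)
    have hsd : s < (TuZero X c).toReal + δ :=
      (ENNReal.ofReal_lt_ofReal_iff (by linarith)).mp hult
    obtain ⟨y, hy, hylt⟩ := exists_lt_of_lt_csSup
      (⟨X 0, 0, ⟨le_rfl, hs0⟩, rfl⟩ : (X '' Icc 0 s).Nonempty)
      (by linarith : X 0 + c < supOn X 0 s)
    obtain ⟨v, hv, rfl⟩ := hy
    have hvt : (TuZero X c).toReal < v := by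
      by_contra hvt; push_neg at hvt
      exact absurd hylt (not_lt.mpr (hcase v hv.1 hvt))
    obtain ⟨f1, f2⟩ := abs_lt.mp (hδ v hvt.le (lt_of_le_of_lt hv.2 hsd))
    linarith
/-! ### no accumulation -/

lemma tu_unbounded (hX : Cadlag X) (hc : 0 < c) (M : ℝ) : ∃ k, ENNReal.ofReal M < Tu X c k := by
  by_contra h; push_neg at h
  have hTule : ∀ k, Tu X c k ≤ ENNReal.ofReal (max M 0) := fun k =>
    (h k).trans (ENNReal.ofReal_le_ofReal (le_max_left _ _))
  have hTdle : ∀ k, Td X c k ≤ ENNReal.ofReal (max M 0) := fun k =>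
    (Td_le_Tu_succ k).trans (hTule (k+1))
  have hTufin : ∀ k, Tu X c k ≠ ⊤ := fun k =>
    ne_top_of_le_ne_top ENNReal.ofReal_ne_top (hTule k)
  have hTdfin : ∀ k, Td X c k ≠ ⊤ := fun k =>
    ne_top_of_le_ne_top ENNReal.ofReal_ne_top (hTdle k)
  set A : ℕ → ℝ := fun k => (Tu X c k).toReal with hA
  set B : ℕ → ℝ := fun k => (Td X c k).toReal with hB
  have hAB : ∀ k, A k ≤ B k := fun k =>
    (ENNReal.toReal_le_toReal (hTufin k) (hTdfin k)).mpr (Tu_le_Td k)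
  have hBA : ∀ k, B k < A (k+1) := fun k =>
    (ENNReal.toReal_lt_toReal (hTdfin k) (hTufin (k+1))).mpr (Td_lt_Tu_succ hX hc (hTdfin k))
  have hAM : ∀ k, A k ≤ max M 0 := fun k =>
    toReal_le_real (hTufin k) (le_max_right _ _) (hTule k)
  have hbdd : BddAbove (range A) := ⟨max M 0, by rintro y ⟨k, rfl⟩; exact hAM k⟩
  set L := ⨆ k, A k with hL
  have hAL : ∀ k, A k ≤ L := fun k => le_ciSup hbdd k
  have hALs : ∀ k, A k < L := fun k => lt_of_lt_of_le (lt_of_le_of_lt (hAB k) (hBA k)) (hAL (k+1))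
  obtain ⟨l, hl⟩ := hX.2 L
  obtain ⟨δ, hδ0, H⟩ := Metric.tendsto_nhdsWithin_nhds.mp hl (c/4) (by linarith)
  obtain ⟨k, hk⟩ := exists_lt_of_lt_ciSup (show L - δ < L by linarith)
  have h2c := Td_attain (c := c) hX (hTdfin k)
  obtain ⟨y, hy, hylt⟩ := exists_lt_of_lt_csSup
    (⟨X (A k), A k, ⟨le_rfl, hAB k⟩, rfl⟩ : (X '' Icc (A k) (B k)).Nonempty)
    (show X (B k) + 2*c - c/4 < supOn X (A k) (B k) by linarith)
  obtain ⟨p, hp, rfl⟩ := hy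
  have hpL : p < L := lt_of_le_of_lt hp.2 (lt_of_lt_of_le (hBA k) (hAL (k+1)))
  have hBL : B k < L := lt_of_lt_of_le (hBA k) (hAL (k+1))
  have hd1 : dist (X p) l < c/4 := H (mem_Iio.mpr hpL)
    (by rw [Real.dist_eq, abs_of_nonpos (by linarith)]; linarith [hp.1])
  have hd2 : dist (X (B k)) l < c/4 := H (mem_Iio.mpr hBL)
    (by rw [Real.dist_eq, abs_of_nonpos (by linarith)]; linarith [(hAB k)])
  rw [Real.dist_eq] at hd1 hd2
  obtain ⟨a1, a2⟩ := abs_lt.mp hd1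
  obtain ⟨b1, b2⟩ := abs_lt.mp hd2
  linarith

/-! ### segment indexing -/

def stt (X : ℝ → ℝ) (c : ℝ) : ℕ → ℝ≥0∞
  | 0 => 0
  | (j+1) => if j % 2 = 0 then Tu X c (j / 2) else Td X c (j / 2)

lemma stt_odd (k : ℕ) : stt X c (2*k+1) = Tu X c k := by
  show (if (2*k) % 2 = 0 then Tu X c ((2*k)/2) else Td X c ((2*k)/2)) = _
  rw [if_pos (by omega)]
  congr 1; omega

lemma stt_even (k : ℕ) : stt X c (2*k+2) = Td X c k := by
  show (if (2*k+1) % 2 = 0 then Tu X c ((2*k+1)/2) else Td X c ((2*k+1)/2)) = _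
  rw [if_neg (by omega)]
  congr 1; omega

lemma nat_tri (j : ℕ) : j = 0 ∨ (∃ k, j = 2*k+1) ∨ (∃ k, j = 2*k+2) := by
  rcases Nat.even_or_odd j with ⟨k, hk⟩ | ⟨k, hk⟩
  · rcases Nat.eq_zero_or_pos k with rfl | hpos
    · left; omega
    · right; right; exact ⟨k-1, by omega⟩
  · right; left; exact ⟨k, by omega⟩

lemma stt_mono : Monotone (stt X c) := by
  refine monotone_nat_of_le_succ fun j => ?_
  rcases nat_tri j with rfl | ⟨k, rfl⟩ | ⟨k, rfl⟩
  · exact zero_le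
  · rw [stt_odd, show 2*k+1+1 = 2*k+2 from rfl, stt_even]; exact Tu_le_Td k
  · rw [stt_even, show 2*k+2+1 = 2*(k+1)+1 by ring, stt_odd]; exact Td_le_Tu_succ k

def Bj (X : ℝ → ℝ) (c : ℝ) (s : ℝ) (j : ℕ) : Prop :=
  stt X c j ≤ ENNReal.ofReal s ∧ ENNReal.ofReal s < stt X c (j+1)

lemma bj_order {s t : ℝ} {j j' : ℕ} (h : Bj X c s j) (h' : Bj X c t j') (hst : s ≤ t) :
    j ≤ j' := by
  by_contra hlt; push_neg at hlt
  have h1 : stt X c (j'+1) ≤ stt X c j := stt_mono (by omega)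
  have h2 : ENNReal.ofReal s ≤ ENNReal.ofReal t := ENNReal.ofReal_le_ofReal hst
  exact absurd (lt_of_lt_of_le h'.2 ((h1.trans h.1).trans h2)) (lt_irrefl _)

lemma bj_unique {s : ℝ} {j j' : ℕ} (h : Bj X c s j) (h' : Bj X c s j') : j = j' :=
  le_antisymm (bj_order h h' le_rfl) (bj_order h' h le_rfl)

lemma bj_cover (hX : Cadlag X) (hc : 0 < c) {s : ℝ} (hs : 0 ≤ s) : ∃ j, Bj X c s j := by
  by_cases h0 : ENNReal.ofReal s < Tu X c 0
  · exact ⟨0, zero_le, by rw [show (0:ℕ)+1 = 2*0+1 by ring, stt_odd]; exact h0⟩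
  · push_neg at h0
    have hex : ∃ k, ENNReal.ofReal s < Tu X c k := tu_unbounded hX hc s
    classical
    have hm0 : Nat.find hex ≠ 0 := by
      intro h
      exact absurd (h ▸ Nat.find_spec hex) (not_lt.mpr h0)
    obtain ⟨k, hk⟩ : ∃ k, Nat.find hex = k + 1 := ⟨Nat.find hex - 1, by omega⟩
    have hkle : Tu X c k ≤ ENNReal.ofReal s := not_lt.mp (Nat.find_min hex (by omega))
    have hklt : ENNReal.ofReal s < Tu X c (k+1) := hk ▸ Nat.find_spec hex
    by_cases hd : ENNReal.ofReal s < Td X c k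
    · exact ⟨2*k+1, by rw [stt_odd]; exact hkle,
        by rw [show 2*k+1+1 = 2*k+2 from rfl, stt_even]; exact hd⟩
    · push_neg at hd
      exact ⟨2*k+2, by rw [stt_even]; exact hd,
        by rw [show 2*k+2+1 = 2*(k+1)+1 by ring, stt_odd]; exact hklt⟩

/-! ### evaluation of Xc -/

lemma Xc_init {s : ℝ} (h : ENNReal.ofReal s < Tu X c 0) : Xc X c s = X 0 := by
  rw [Xc, if_pos h]

lemma Xc_up (hX : Cadlag X) (hc : 0 < c) {s : ℝ} {k : ℕ}
    (hk1 : Tu X c k ≤ ENNReal.ofReal s) (hk2 : ENNReal.ofReal s < Td X c k) :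
    Xc X c s = supOn X (Tu X c k).toReal s - c := by
  have hup : ∃ k, Tu X c k ≤ ENNReal.ofReal s ∧ ENNReal.ofReal s < Td X c k := ⟨k, hk1, hk2⟩
  have hn0 : ¬ (ENNReal.ofReal s < Tu X c 0) :=
    not_lt.mpr ((Tu_mono (Nat.zero_le k)).trans hk1)
  rw [Xc, if_neg hn0, dif_pos hup]
  have hfind := Nat.find_spec hup
  have heq : Nat.find hup = k := by
    have h1 : Bj X c s (2 * Nat.find hup + 1) :=
      ⟨by rw [stt_odd]; exact hfind.1,
       by rw [show 2*(Nat.find hup)+1+1 = 2*(Nat.find hup)+2 from rfl, stt_even]; exact hfind.2⟩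
    have h2 : Bj X c s (2*k+1) :=
      ⟨by rw [stt_odd]; exact hk1,
       by rw [show 2*k+1+1 = 2*k+2 from rfl, stt_even]; exact hk2⟩
    have := bj_unique h1 h2; omega
  rw [heq]

lemma Xc_down (hX : Cadlag X) (hc : 0 < c) {s : ℝ} {k : ℕ}
    (hk1 : Td X c k ≤ ENNReal.ofReal s) (hk2 : ENNReal.ofReal s < Tu X c (k+1)) :
    Xc X c s = infOn X (Td X c k).toReal s + c := by
  have hbj : Bj X c s (2*k+2) :=
    ⟨by rw [stt_even]; exact hk1,
     by rw [show 2*k+2+1 = 2*(k+1)+1 by ring, stt_odd]; exact hk2⟩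
  have hdown : ∃ k, Td X c k ≤ ENNReal.ofReal s ∧ ENNReal.ofReal s < Tu X c (k+1) :=
    ⟨k, hk1, hk2⟩
  have hn0 : ¬ (ENNReal.ofReal s < Tu X c 0) :=
    not_lt.mpr (((Tu_mono (Nat.zero_le k)).trans (Tu_le_Td k)).trans hk1)
  have hnup : ¬ ∃ k, Tu X c k ≤ ENNReal.ofReal s ∧ ENNReal.ofReal s < Td X c k := by
    rintro ⟨k', h1', h2'⟩
    have hbj' : Bj X c s (2*k'+1) :=
      ⟨by rw [stt_odd]; exact h1',
       by rw [show 2*k'+1+1 = 2*k'+2 from rfl, stt_even]; exact h2'⟩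
    have := bj_unique hbj hbj'; omega
  rw [Xc, if_neg hn0, dif_neg hnup, dif_pos hdown]
  have hfind := Nat.find_spec hdown
  have heq : Nat.find hdown = k := by
    have h1 : Bj X c s (2 * Nat.find hdown + 2) :=
      ⟨by rw [stt_even]; exact hfind.1,
       by rw [show 2*(Nat.find hdown)+2+1 = 2*(Nat.find hdown + 1)+1 by ring, stt_odd]
          exact hfind.2⟩
    have := bj_unique h1 hbj; omega
  rw [heq]

/-! ### pointwise closeness -/

lemma xc_close (hX : Cadlag X) (hc : 0 < c) (hud : Tu X c 0 ≤ TdIni X c) {s : ℝ}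
    (hs : 0 ≤ s) : |X s - Xc X c s| ≤ c := by
  obtain ⟨j, hj⟩ := bj_cover hX hc hs
  rcases nat_tri j with rfl | ⟨k, rfl⟩ | ⟨k, rfl⟩
  · have h1 : ENNReal.ofReal s < Tu X c 0 := by
      have := hj.2; rwa [show (0:ℕ)+1 = 2*0+1 by ring, stt_odd] at this
    rw [Xc_init h1]
    have hsup : supOn X 0 s - X 0 ≤ c := tuZero_not_yet hs h1
    have hinf : X 0 - infOn X 0 s ≤ c := tdIni_not_yet hs (lt_of_lt_of_le h1 hud)
    have h2 : X s ≤ supOn X 0 s := le_supOn hX ⟨hs, le_rfl⟩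
    have h3 : infOn X 0 s ≤ X s := infOn_le hX ⟨hs, le_rfl⟩
    rw [abs_le]; constructor <;> linarith
  · have h1 : Tu X c k ≤ ENNReal.ofReal s := by rw [← stt_odd (c := c) k]; exact hj.1
    have h2 : ENNReal.ofReal s < Td X c k := by
      have := hj.2
      rwa [show 2*k+1+1 = 2*k+2 from rfl, stt_even] at this
    rw [Xc_up hX hc h1 h2]
    have hfin : Tu X c k ≠ ⊤ := ne_top_of_le_ne_top ENNReal.ofReal_ne_top h1
    have hts : (Tu X c k).toReal ≤ s := toReal_le_real hfin hs h1
    have h3 : X s ≤ supOn X (Tu X c k).toReal s := le_supOn hX ⟨hts, le_rfl⟩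
    have h4 : supOn X (Tu X c k).toReal s - X s ≤ 2*c := Td_not_yet hs h1 h2
    rw [abs_le]; constructor <;> linarith
  · have h1 : Td X c k ≤ ENNReal.ofReal s := by rw [← stt_even (c := c) k]; exact hj.1
    have h2 : ENNReal.ofReal s < Tu X c (k+1) := by
      have := hj.2
      rwa [show 2*k+2+1 = 2*(k+1)+1 by ring, stt_odd] at this
    rw [Xc_down hX hc h1 h2]
    have hfin : Td X c k ≠ ⊤ := ne_top_of_le_ne_top ENNReal.ofReal_ne_top h1
    have hts : (Td X c k).toReal ≤ s := toReal_le_real hfin hs h1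
    have h3 : infOn X (Td X c k).toReal s ≤ X s := infOn_le hX ⟨hts, le_rfl⟩
    have h4 : X s - infOn X (Td X c k).toReal s ≤ 2*c := Tu_succ_not_yet hs h1 h2
    rw [abs_le]; constructor <;> linarith

/-! ### left inequality -/

lemma left_ineq (hX : Cadlag X) (hc : 0 < c) (hud : Tu X c 0 ≤ TdIni X c) (T : ℝ) :
    TVtrunc X (2*c) T ≤ eVariationOn (Xc X c) (Icc 0 T) := by
  rw [TVtrunc]
  refine iSup_le fun n => iSup_le fun t => iSup_le fun hmono => iSup_le fun hmem => ?_
  refine le_trans ?_ (eVariationOn.sum_le (n := n) hmono hmem)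
  refine Finset.sum_le_sum fun i _ => ?_
  have h1 := xc_close hX hc hud (hmem (i+1)).1
  have h2 := xc_close hX hc hud (hmem i).1
  rw [edist_dist, Real.dist_eq]
  refine ENNReal.ofReal_le_ofReal ?_
  set u := t (i+1); set v := t i
  have key : |X u - X v - (Xc X c u - Xc X c v)| ≤ 2*c := by
    have heq : X u - X v - (Xc X c u - Xc X c v) = (X u - Xc X c u) - (X v - Xc X c v) := by
      ring
    rw [heq]
    calc |(X u - Xc X c u) - (X v - Xc X c v)|
        ≤ |X u - Xc X c u| + |X v - Xc X c v| := abs_sub _ _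
      _ ≤ 2*c := by linarith
  have h3 := abs_sub_abs_le_abs_sub (X u - X v) (Xc X c u - Xc X c v)
  linarith
/-! ### Jordan decomposition of Xc -/

def AK (X : ℝ → ℝ) (c : ℝ) (k : ℕ) : ℝ := (Tu X c k).toReal
def BK (X : ℝ → ℝ) (c : ℝ) (k : ℕ) : ℝ := (Td X c k).toReal
def SK (X : ℝ → ℝ) (c : ℝ) (k : ℕ) : ℝ := supOn X (AK X c k) (BK X c k)
def IK (X : ℝ → ℝ) (c : ℝ) (k : ℕ) : ℝ := infOn X (BK X c k) (AK X c (k+1))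

def G (X : ℝ → ℝ) (c : ℝ) : ℕ → ℝ
  | 0 => X (AK X c 0) - X 0 - c
  | (k+1) => G X c k + (SK X c k - X (AK X c k)) + (X (AK X c (k+1)) - IK X c k - 2*c)

open Classical in
def gfun (X : ℝ → ℝ) (c : ℝ) (s : ℝ) : ℝ :=
  if ENNReal.ofReal s < Tu X c 0 then 0
  else if h : ∃ k, Tu X c k ≤ ENNReal.ofReal s ∧ ENNReal.ofReal s < Td X c k then
    G X c (Nat.find h) + supOn X (AK X c (Nat.find h)) s - X (AK X c (Nat.find h))
  else if h' : ∃ k, Td X c k ≤ ENNReal.ofReal s ∧ ENNReal.ofReal s < Tu X c (k + 1) then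
    G X c (Nat.find h') + SK X c (Nat.find h') - X (AK X c (Nat.find h'))
  else 0

def hfun (X : ℝ → ℝ) (c : ℝ) (s : ℝ) : ℝ := gfun X c s - Xc X c s

/-! ### Bj conversions -/

lemma bj_init' {s : ℝ} (h : Bj X c s 0) : ENNReal.ofReal s < Tu X c 0 := by
  have := h.2; rwa [show (0:ℕ)+1 = 2*0+1 by ring, stt_odd] at this

lemma init_bj {s : ℝ} (h : ENNReal.ofReal s < Tu X c 0) : Bj X c s 0 :=
  ⟨zero_le, by rw [show (0:ℕ)+1 = 2*0+1 by ring, stt_odd]; exact h⟩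

lemma bj_up' {s : ℝ} {k : ℕ} (h : Bj X c s (2*k+1)) :
    Tu X c k ≤ ENNReal.ofReal s ∧ ENNReal.ofReal s < Td X c k :=
  ⟨by rw [← stt_odd (c := c) k]; exact h.1,
   by have := h.2; rwa [show 2*k+1+1 = 2*k+2 from rfl, stt_even] at this⟩

lemma up_bj {s : ℝ} {k : ℕ} (h1 : Tu X c k ≤ ENNReal.ofReal s)
    (h2 : ENNReal.ofReal s < Td X c k) : Bj X c s (2*k+1) :=
  ⟨by rw [stt_odd]; exact h1,
   by rw [show 2*k+1+1 = 2*k+2 from rfl, stt_even]; exact h2⟩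

lemma bj_down' {s : ℝ} {k : ℕ} (h : Bj X c s (2*k+2)) :
    Td X c k ≤ ENNReal.ofReal s ∧ ENNReal.ofReal s < Tu X c (k+1) :=
  ⟨by rw [← stt_even (c := c) k]; exact h.1,
   by have := h.2; rwa [show 2*k+2+1 = 2*(k+1)+1 by ring, stt_odd] at this⟩

lemma down_bj {s : ℝ} {k : ℕ} (h1 : Td X c k ≤ ENNReal.ofReal s)
    (h2 : ENNReal.ofReal s < Tu X c (k+1)) : Bj X c s (2*k+2) :=
  ⟨by rw [stt_even]; exact h1,
   by rw [show 2*k+2+1 = 2*(k+1)+1 by ring, stt_odd]; exact h2⟩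

/-! ### evaluation of gfun -/

lemma g_init {s : ℝ} (h : ENNReal.ofReal s < Tu X c 0) : gfun X c s = 0 := by
  rw [gfun, if_pos h]

lemma g_up {s : ℝ} {k : ℕ}
    (hk1 : Tu X c k ≤ ENNReal.ofReal s) (hk2 : ENNReal.ofReal s < Td X c k) :
    gfun X c s = G X c k + supOn X (AK X c k) s - X (AK X c k) := by
  have hup : ∃ k, Tu X c k ≤ ENNReal.ofReal s ∧ ENNReal.ofReal s < Td X c k := ⟨k, hk1, hk2⟩
  have hn0 : ¬ (ENNReal.ofReal s < Tu X c 0) :=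
    not_lt.mpr ((Tu_mono (Nat.zero_le k)).trans hk1)
  rw [gfun, if_neg hn0, dif_pos hup]
  have hfind := Nat.find_spec hup
  have heq : Nat.find hup = k := by
    have := bj_unique (up_bj hfind.1 hfind.2) (up_bj hk1 hk2); omega
  rw [heq]

lemma g_down {s : ℝ} {k : ℕ}
    (hk1 : Td X c k ≤ ENNReal.ofReal s) (hk2 : ENNReal.ofReal s < Tu X c (k+1)) :
    gfun X c s = G X c k + SK X c k - X (AK X c k) := by
  have hdown : ∃ k, Td X c k ≤ ENNReal.ofReal s ∧ ENNReal.ofReal s < Tu X c (k+1) :=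
    ⟨k, hk1, hk2⟩
  have hn0 : ¬ (ENNReal.ofReal s < Tu X c 0) :=
    not_lt.mpr (((Tu_mono (Nat.zero_le k)).trans (Tu_le_Td k)).trans hk1)
  have hnup : ¬ ∃ k, Tu X c k ≤ ENNReal.ofReal s ∧ ENNReal.ofReal s < Td X c k := by
    rintro ⟨k', h1', h2'⟩
    have := bj_unique (down_bj hk1 hk2) (up_bj h1' h2'); omega
  rw [gfun, if_neg hn0, dif_neg hnup, dif_pos hdown]
  have hfind := Nat.find_spec hdown
  have heq : Nat.find hdown = k := by
    have := bj_unique (down_bj hfind.1 hfind.2) (down_bj hk1 hk2); omega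
  rw [heq]

/-! ### evaluation of hfun -/

lemma h_init {s : ℝ} (h : ENNReal.ofReal s < Tu X c 0) : hfun X c s = - X 0 := by
  rw [hfun, g_init h, Xc_init h]; ring

lemma h_up (hX : Cadlag X) (hc : 0 < c) {s : ℝ} {k : ℕ}
    (hk1 : Tu X c k ≤ ENNReal.ofReal s) (hk2 : ENNReal.ofReal s < Td X c k) :
    hfun X c s = G X c k - X (AK X c k) + c := by
  rw [hfun, g_up hk1 hk2, Xc_up hX hc hk1 hk2]
  show G X c k + supOn X (AK X c k) s - X (AK X c k) -
    (supOn X (Tu X c k).toReal s - c) = _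
  rw [show (Tu X c k).toReal = AK X c k from rfl]; ring

lemma h_down (hX : Cadlag X) (hc : 0 < c) {s : ℝ} {k : ℕ}
    (hk1 : Td X c k ≤ ENNReal.ofReal s) (hk2 : ENNReal.ofReal s < Tu X c (k+1)) :
    hfun X c s = G X c k + SK X c k - X (AK X c k) - infOn X (BK X c k) s - c := by
  rw [hfun, g_down hk1 hk2, Xc_down hX hc hk1 hk2]
  rw [show (Td X c k).toReal = BK X c k from rfl]; ring

/-! ### segment facts -/

lemma AK_le_BK {k : ℕ} (hfin : Td X c k ≠ ⊤) : AK X c k ≤ BK X c k :=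
  (ENNReal.toReal_le_toReal (ne_top_of_le_ne_top hfin (Tu_le_Td k)) hfin).mpr (Tu_le_Td k)

lemma BK_le_AK_succ {k : ℕ} (hfin : Tu X c (k+1) ≠ ⊤) : BK X c k ≤ AK X c (k+1) :=
  (ENNReal.toReal_le_toReal (ne_top_of_le_ne_top hfin (Td_le_Tu_succ k)) hfin).mpr
    (Td_le_Tu_succ k)

lemma XA_le_SK (hX : Cadlag X) {k : ℕ} (hfin : Td X c k ≠ ⊤) :
    X (AK X c k) ≤ SK X c k :=
  le_supOn hX ⟨le_rfl, AK_le_BK hfin⟩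

lemma IK_le_XB (hX : Cadlag X) {k : ℕ} (hfin : Tu X c (k+1) ≠ ⊤) :
    IK X c k ≤ X (BK X c k) :=
  infOn_le hX ⟨le_rfl, BK_le_AK_succ hfin⟩

lemma SK_attain (hX : Cadlag X) {k : ℕ} (hfin : Td X c k ≠ ⊤) :
    2*c ≤ SK X c k - X (BK X c k) := Td_attain hX hfin

lemma IK_attain (hX : Cadlag X) {k : ℕ} (hfin : Tu X c (k+1) ≠ ⊤) :
    2*c ≤ X (AK X c (k+1)) - IK X c k := Tu_succ_attain hX hfin

lemma G_zero_nonneg (hX : Cadlag X) (hc : 0 < c) (hfin : Tu X c 0 ≠ ⊤) :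
    0 ≤ G X c 0 := by
  have := tuZero_attain hX hc (show TuZero X c ≠ ⊤ from hfin)
  show 0 ≤ X (AK X c 0) - X 0 - c
  have hh : X ((TuZero X c).toReal) = X (AK X c 0) := rfl
  linarith [hh ▸ this]

lemma G_succ (k : ℕ) : G X c (k+1) =
    G X c k + (SK X c k - X (AK X c k)) + (X (AK X c (k+1)) - IK X c k - 2*c) := rfl

/-! ### U chains -/

def U (X : ℝ → ℝ) (c : ℝ) : ℕ → ℝ
  | 0 => 0
  | (j+1) => if j % 2 = 0 then G X c (j/2)
             else G X c (j/2) + SK X c (j/2) - X (AK X c (j/2))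

def Uh (X : ℝ → ℝ) (c : ℝ) : ℕ → ℝ
  | 0 => - X 0
  | (j+1) => if j % 2 = 0 then G X c (j/2) - X (AK X c (j/2)) + c
             else G X c (j/2) + SK X c (j/2) - X (AK X c (j/2)) - X (BK X c (j/2)) - c

lemma U_odd (k : ℕ) : U X c (2*k+1) = G X c k := by
  show (if (2*k) % 2 = 0 then G X c ((2*k)/2) else _) = _
  rw [if_pos (by omega)]; congr 1; omega

lemma U_even (k : ℕ) : U X c (2*k+2) = G X c k + SK X c k - X (AK X c k) := by
  show (if (2*k+1) % 2 = 0 then _ else G X c ((2*k+1)/2) + SK X c ((2*k+1)/2) -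
    X (AK X c ((2*k+1)/2))) = _
  rw [if_neg (by omega)]
  have : (2*k+1)/2 = k := by omega
  rw [this]

lemma Uh_odd (k : ℕ) : Uh X c (2*k+1) = G X c k - X (AK X c k) + c := by
  show (if (2*k) % 2 = 0 then G X c ((2*k)/2) - X (AK X c ((2*k)/2)) + c else _) = _
  rw [if_pos (by omega)]
  have : (2*k)/2 = k := by omega
  rw [this]

lemma Uh_even (k : ℕ) : Uh X c (2*k+2) =
    G X c k + SK X c k - X (AK X c k) - X (BK X c k) - c := by
  show (if (2*k+1) % 2 = 0 then _ else G X c ((2*k+1)/2) + SK X c ((2*k+1)/2) -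
    X (AK X c ((2*k+1)/2)) - X (BK X c ((2*k+1)/2)) - c) = _
  rw [if_neg (by omega)]
  have : (2*k+1)/2 = k := by omega
  rw [this]

lemma stt_fin_Tu {k : ℕ} (h : stt X c (2*k+1) ≠ ⊤) : Tu X c k ≠ ⊤ := by
  rwa [stt_odd] at h

lemma stt_fin_Td {k : ℕ} (h : stt X c (2*k+2) ≠ ⊤) : Td X c k ≠ ⊤ := by
  rwa [stt_even] at h

lemma U_chain (hX : Cadlag X) (hc : 0 < c) (j : ℕ) (hfin : stt X c (j+1) ≠ ⊤) :
    U X c j ≤ U X c (j+1) := by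
  rcases nat_tri j with rfl | ⟨k, rfl⟩ | ⟨k, rfl⟩
  · rw [show (0:ℕ)+1 = 2*0+1 by ring] at hfin ⊢
    rw [U_odd]
    exact G_zero_nonneg hX hc (stt_fin_Tu hfin)
  · rw [show 2*k+1+1 = 2*k+2 from rfl] at hfin ⊢
    rw [U_odd, U_even]
    have := XA_le_SK hX (stt_fin_Td hfin)
    linarith
  · rw [show 2*k+2+1 = 2*(k+1)+1 by ring] at hfin ⊢
    rw [U_even, U_odd, G_succ]
    have hTu : Tu X c (k+1) ≠ ⊤ := stt_fin_Tu hfin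
    have := IK_attain hX hTu
    linarith

lemma Uh_chain (hX : Cadlag X) (hc : 0 < c) (j : ℕ) (hfin : stt X c (j+1) ≠ ⊤) :
    Uh X c j ≤ Uh X c (j+1) := by
  rcases nat_tri j with rfl | ⟨k, rfl⟩ | ⟨k, rfl⟩
  · rw [show (0:ℕ)+1 = 2*0+1 by ring] at hfin ⊢
    rw [Uh_odd]
    show -X 0 ≤ _
    have h0 : G X c 0 = X (AK X c 0) - X 0 - c := rfl
    rw [h0]; ring_nf; exact le_rfl
  · rw [show 2*k+1+1 = 2*k+2 from rfl] at hfin ⊢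
    rw [Uh_odd, Uh_even]
    have := SK_attain hX (stt_fin_Td hfin)
    linarith
  · rw [show 2*k+2+1 = 2*(k+1)+1 by ring] at hfin ⊢
    rw [Uh_even, Uh_odd, G_succ]
    have hTu : Tu X c (k+1) ≠ ⊤ := stt_fin_Tu hfin
    have h1 := IK_le_XB hX hTu
    linarith

lemma U_mono (hX : Cadlag X) (hc : 0 < c) {j j' : ℕ} (hjj : j ≤ j')
    (hfin : stt X c j' ≠ ⊤) : U X c j ≤ U X c j' := by
  induction j', hjj using Nat.le_induction with
  | base => exact le_rfl
  | succ m hm ih =>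
    have hfm : stt X c m ≠ ⊤ := ne_top_of_le_ne_top hfin (stt_mono (Nat.le_succ m))
    exact (ih hfm).trans (U_chain hX hc m hfin)

lemma Uh_mono (hX : Cadlag X) (hc : 0 < c) {j j' : ℕ} (hjj : j ≤ j')
    (hfin : stt X c j' ≠ ⊤) : Uh X c j ≤ Uh X c j' := by
  induction j', hjj using Nat.le_induction with
  | base => exact le_rfl
  | succ m hm ih =>
    have hfm : stt X c m ≠ ⊤ := ne_top_of_le_ne_top hfin (stt_mono (Nat.le_succ m))
    exact (ih hfm).trans (Uh_chain hX hc m hfin)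

/-! ### bounds of g, h on segments -/

lemma AK_le_of_bj {s : ℝ} {k : ℕ} (hs : 0 ≤ s) (h1 : Tu X c k ≤ ENNReal.ofReal s) :
    AK X c k ≤ s :=
  toReal_le_real (ne_top_of_le_ne_top ENNReal.ofReal_ne_top h1) hs h1

lemma BK_le_of_bj {s : ℝ} {k : ℕ} (hs : 0 ≤ s) (h1 : Td X c k ≤ ENNReal.ofReal s) :
    BK X c k ≤ s :=
  toReal_le_real (ne_top_of_le_ne_top ENNReal.ofReal_ne_top h1) hs h1

lemma g_lb (hX : Cadlag X) (hc : 0 < c) {s : ℝ} {j : ℕ} (hs : 0 ≤ s) (hbj : Bj X c s j) :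
    U X c j ≤ gfun X c s := by
  rcases nat_tri j with rfl | ⟨k, rfl⟩ | ⟨k, rfl⟩
  · rw [g_init (bj_init' hbj)]; exact le_rfl
  · obtain ⟨h1, h2⟩ := bj_up' hbj
    rw [g_up h1 h2, U_odd]
    have := le_supOn hX (a := AK X c k) (s := s) ⟨le_rfl, AK_le_of_bj hs h1⟩
    linarith
  · obtain ⟨h1, h2⟩ := bj_down' hbj
    rw [g_down h1 h2, U_even]

lemma g_ub (hX : Cadlag X) (hc : 0 < c) {s : ℝ} {j : ℕ} (hs : 0 ≤ s) (hbj : Bj X c s j)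
    (hfin : stt X c (j+1) ≠ ⊤) : gfun X c s ≤ U X c (j+1) := by
  rcases nat_tri j with rfl | ⟨k, rfl⟩ | ⟨k, rfl⟩
  · rw [g_init (bj_init' hbj), show (0:ℕ)+1 = 2*0+1 by ring] at *
    rw [U_odd]
    exact G_zero_nonneg hX hc (stt_fin_Tu (by rwa [show 2*0+1 = (0:ℕ)+1 by ring]))
  · obtain ⟨h1, h2⟩ := bj_up' hbj
    rw [show 2*k+1+1 = 2*k+2 from rfl] at hfin ⊢
    rw [g_up h1 h2, U_even]
    have hTd : Td X c k ≠ ⊤ := stt_fin_Td hfin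
    have hsB : s ≤ BK X c k := real_le_toReal hTd hs h2.le
    have := supOn_mono hX (AK_le_of_bj hs h1) hsB
    show _ ≤ G X c k + SK X c k - X (AK X c k)
    have hSK : supOn X (AK X c k) (BK X c k) = SK X c k := rfl
    linarith [hSK ▸ this]
  · obtain ⟨h1, h2⟩ := bj_down' hbj
    rw [show 2*k+2+1 = 2*(k+1)+1 by ring] at hfin ⊢
    rw [g_down h1 h2, U_odd, G_succ]
    have hTu : Tu X c (k+1) ≠ ⊤ := stt_fin_Tu hfin
    have := IK_attain hX hTu
    linarith

lemma h_lb (hX : Cadlag X) (hc : 0 < c) {s : ℝ} {j : ℕ} (hs : 0 ≤ s) (hbj : Bj X c s j) :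
    Uh X c j ≤ hfun X c s := by
  rcases nat_tri j with rfl | ⟨k, rfl⟩ | ⟨k, rfl⟩
  · rw [h_init (bj_init' hbj)]; exact le_rfl
  · obtain ⟨h1, h2⟩ := bj_up' hbj
    rw [h_up hX hc h1 h2, Uh_odd]
  · obtain ⟨h1, h2⟩ := bj_down' hbj
    rw [h_down hX hc h1 h2, Uh_even]
    have := infOn_le hX (a := BK X c k) (s := s) ⟨le_rfl, BK_le_of_bj hs h1⟩
    linarith

lemma h_ub (hX : Cadlag X) (hc : 0 < c) {s : ℝ} {j : ℕ} (hs : 0 ≤ s) (hbj : Bj X c s j)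
    (hfin : stt X c (j+1) ≠ ⊤) : hfun X c s ≤ Uh X c (j+1) := by
  rcases nat_tri j with rfl | ⟨k, rfl⟩ | ⟨k, rfl⟩
  · rw [h_init (bj_init' hbj), show (0:ℕ)+1 = 2*0+1 by ring, Uh_odd]
    have h0 : G X c 0 = X (AK X c 0) - X 0 - c := rfl
    rw [h0]; ring_nf; exact le_rfl
  · obtain ⟨h1, h2⟩ := bj_up' hbj
    rw [show 2*k+1+1 = 2*k+2 from rfl] at hfin ⊢
    rw [h_up hX hc h1 h2, Uh_even]
    have := SK_attain hX (stt_fin_Td hfin)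
    linarith
  · obtain ⟨h1, h2⟩ := bj_down' hbj
    rw [show 2*k+2+1 = 2*(k+1)+1 by ring] at hfin ⊢
    rw [h_down hX hc h1 h2, Uh_odd, G_succ]
    have hTu : Tu X c (k+1) ≠ ⊤ := stt_fin_Tu hfin
    have hsA : s ≤ AK X c (k+1) := real_le_toReal hTu hs h2.le
    have := infOn_anti hX (BK_le_of_bj hs h1) hsA
    have hIK : infOn X (BK X c k) (AK X c (k+1)) = IK X c k := rfl
    linarith [hIK ▸ this]

/-! ### monotonicity -/

lemma g_mono (hX : Cadlag X) (hc : 0 < c) {s t : ℝ} (hs : 0 ≤ s) (hst : s ≤ t) :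
    gfun X c s ≤ gfun X c t := by
  have ht : 0 ≤ t := hs.trans hst
  obtain ⟨j, hj⟩ := bj_cover hX hc hs
  obtain ⟨j', hj'⟩ := bj_cover hX hc ht
  have hij := bj_order hj hj' hst
  rcases eq_or_lt_of_le hij with rfl | hlt
  · rcases nat_tri j with rfl | ⟨k, rfl⟩ | ⟨k, rfl⟩
    · rw [g_init (bj_init' hj), g_init (bj_init' hj')]
    · obtain ⟨h1, h2⟩ := bj_up' hj
      obtain ⟨h1', h2'⟩ := bj_up' hj'
      rw [g_up h1 h2, g_up h1' h2']
      have := supOn_mono hX (AK_le_of_bj hs h1) hst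
      linarith
    · obtain ⟨h1, h2⟩ := bj_down' hj
      obtain ⟨h1', h2'⟩ := bj_down' hj'
      rw [g_down h1 h2, g_down h1' h2']
  · have hfin' : stt X c j' ≠ ⊤ := ne_top_of_le_ne_top ENNReal.ofReal_ne_top hj'.1
    have hfin : stt X c (j+1) ≠ ⊤ :=
      ne_top_of_le_ne_top hfin' (stt_mono (by omega))
    calc gfun X c s ≤ U X c (j+1) := g_ub hX hc hs hj hfin
      _ ≤ U X c j' := U_mono hX hc (by omega) hfin'
      _ ≤ gfun X c t := g_lb hX hc ht hj'

lemma h_mono (hX : Cadlag X) (hc : 0 < c) {s t : ℝ} (hs : 0 ≤ s) (hst : s ≤ t) :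
    hfun X c s ≤ hfun X c t := by
  have ht : 0 ≤ t := hs.trans hst
  obtain ⟨j, hj⟩ := bj_cover hX hc hs
  obtain ⟨j', hj'⟩ := bj_cover hX hc ht
  have hij := bj_order hj hj' hst
  rcases eq_or_lt_of_le hij with rfl | hlt
  · rcases nat_tri j with rfl | ⟨k, rfl⟩ | ⟨k, rfl⟩
    · rw [h_init (bj_init' hj), h_init (bj_init' hj')]
    · obtain ⟨h1, h2⟩ := bj_up' hj
      obtain ⟨h1', h2'⟩ := bj_up' hj'
      rw [h_up hX hc h1 h2, h_up hX hc h1' h2']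
    · obtain ⟨h1, h2⟩ := bj_down' hj
      obtain ⟨h1', h2'⟩ := bj_down' hj'
      rw [h_down hX hc h1 h2, h_down hX hc h1' h2']
      have := infOn_anti hX (BK_le_of_bj hs h1) hst
      linarith
  · have hfin' : stt X c j' ≠ ⊤ := ne_top_of_le_ne_top ENNReal.ofReal_ne_top hj'.1
    have hfin : stt X c (j+1) ≠ ⊤ :=
      ne_top_of_le_ne_top hfin' (stt_mono (by omega))
    calc hfun X c s ≤ Uh X c (j+1) := h_ub hX hc hs hj hfin
      _ ≤ Uh X c j' := Uh_mono hX hc (by omega) hfin'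
      _ ≤ hfun X c t := h_lb hX hc ht hj'
/-! ### variation bound via Jordan decomposition -/

lemma eVar_le_jordan {g h f : ℝ → ℝ} {T : ℝ} (hT : 0 ≤ T)
    (hg : ∀ ⦃s t : ℝ⦄, 0 ≤ s → s ≤ t → g s ≤ g t)
    (hh : ∀ ⦃s t : ℝ⦄, 0 ≤ s → s ≤ t → h s ≤ h t)
    (hf : ∀ s : ℝ, f s = g s - h s) :
    eVariationOn f (Icc 0 T) ≤
      ENNReal.ofReal (g T - g 0) + ENNReal.ofReal (h T - h 0) := by
  rw [eVariationOn]
  refine iSup_le ?_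
  rintro ⟨n, u, hu, us⟩
  calc ∑ i ∈ Finset.range n, edist (f (u (i+1))) (f (u i))
      ≤ ∑ i ∈ Finset.range n, (ENNReal.ofReal (g (u (i+1)) - g (u i)) +
          ENNReal.ofReal (h (u (i+1)) - h (u i))) := by
        refine Finset.sum_le_sum fun i _ => ?_
        have h1 : g (u i) ≤ g (u (i+1)) := hg (us i).1 (hu (Nat.le_succ i))
        have h2 : h (u i) ≤ h (u (i+1)) := hh (us i).1 (hu (Nat.le_succ i))
        rw [hf (u (i+1)), hf (u i), edist_dist, Real.dist_eq,
          ← ENNReal.ofReal_add (by linarith) (by linarith)]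
        refine ENNReal.ofReal_le_ofReal ?_
        rw [abs_le]; constructor <;> linarith
    _ = (∑ i ∈ Finset.range n, ENNReal.ofReal (g (u (i+1)) - g (u i))) +
        (∑ i ∈ Finset.range n, ENNReal.ofReal (h (u (i+1)) - h (u i))) :=
        Finset.sum_add_distrib
    _ ≤ ENNReal.ofReal (g T - g 0) + ENNReal.ofReal (h T - h 0) := by
        have key : ∀ (φ : ℝ → ℝ), (∀ ⦃s t : ℝ⦄, 0 ≤ s → s ≤ t → φ s ≤ φ t) →
            (∑ i ∈ Finset.range n, ENNReal.ofReal (φ (u (i+1)) - φ (u i))) ≤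
              ENNReal.ofReal (φ T - φ 0) := by
          intro φ hφ
          rw [← ENNReal.ofReal_sum_of_nonneg (fun i _ => by
            have := hφ (us i).1 (hu (Nat.le_succ i)); linarith)]
          rw [Finset.sum_range_sub (fun i => φ (u i))]
          refine ENNReal.ofReal_le_ofReal ?_
          have e1 : φ (u n) ≤ φ T := hφ (us n).1 (us n).2
          have e2 : φ 0 ≤ φ (u 0) := hφ le_rfl (us 0).1
          linarith
        exact add_le_add (key g hg) (key h hh)

/-! ### partition machinery -/

def rSum (X : ℝ → ℝ) (c : ℝ) (n : ℕ) (t : ℕ → ℝ) : ℝ :=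
  ∑ i ∈ Finset.range n, (|X (t (i+1)) - X (t i)| - 2*c)

lemma ofReal_sum_le (n : ℕ) (f : ℕ → ℝ) :
    ENNReal.ofReal (∑ i ∈ Finset.range n, f i) ≤
      ∑ i ∈ Finset.range n, ENNReal.ofReal (f i) := by
  induction n with
  | zero => simp
  | succ n ih =>
    rw [Finset.sum_range_succ, Finset.sum_range_succ]
    exact le_trans ENNReal.ofReal_add_le (add_le_add ih le_rfl)

lemma rSum_le_TV {T : ℝ} (n : ℕ) (t : ℕ → ℝ) (hmono : Monotone t)
    (hmem : ∀ i, t i ∈ Icc 0 T) :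
    ENNReal.ofReal (rSum X c n t) ≤ TVtrunc X (2*c) T := by
  refine le_trans (ofReal_sum_le n _) ?_
  rw [TVtrunc]
  exact le_iSup_of_le n (le_iSup_of_le t (le_iSup_of_le hmono (le_iSup_of_le hmem le_rfl)))

lemma extend_partition {n : ℕ} {t : ℕ → ℝ} (hmono : Monotone t) {p : ℝ} (hp : t n ≤ p) :
    ∃ t' : ℕ → ℝ, Monotone t' ∧ (∀ i ≤ n, t' i = t i) ∧ t' (n+1) = p ∧
      (∀ i, n+1 ≤ i → t' i = p) ∧
      rSum X c (n+1) t' = rSum X c n t + (|X p - X (t n)| - 2*c) := by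
  refine ⟨fun i => if i ≤ n then t i else p, ?_, fun i hi => if_pos hi,
    if_neg (by omega), fun i hi => if_neg (by omega), ?_⟩
  · intro i j hij
    by_cases hi : i ≤ n <;> by_cases hj : j ≤ n
    · simpa [hi, hj] using hmono hij
    · simp only [if_pos hi, if_neg hj]
      exact (hmono hi).trans hp
    · omega
    · simp [hi, hj]
  · rw [rSum, rSum, Finset.sum_range_succ]
    congr 1
    · refine Finset.sum_congr rfl fun i hi => ?_
      have hin : i < n := Finset.mem_range.mp hi
      rw [if_pos (by omega : i ≤ n), if_pos (by omega : i + 1 ≤ n)]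
    · rw [if_neg (by omega : ¬ (n+1 ≤ n)), if_pos (le_refl n)]

/-! ### the key invariant -/

lemma inv_partition (hX : Cadlag X) (hc : 0 < c) :
    ∀ k : ℕ, Tu X c k ≠ ⊤ → ∀ ε > (0:ℝ), ∃ n, ∃ t : ℕ → ℝ, Monotone t ∧
      (∀ i, t i ∈ Icc 0 (AK X c k)) ∧
      2*(G X c k - G X c 0) - 2*(X (AK X c k) - X (AK X c 0)) - X 0 + X (t n) - ε
        ≤ rSum X c n t := by
  intro k
  induction k with
  | zero =>
    intro hfin ε hε
    refine ⟨0, fun _ => 0, monotone_const, fun i => ⟨le_rfl, ENNReal.toReal_nonneg⟩, ?_⟩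
    have h0 : rSum X c 0 (fun _ => 0) = 0 := by simp [rSum]
    rw [h0]
    linarith
  | succ k ih =>
    intro hfin ε hε
    have hTd : Td X c k ≠ ⊤ := ne_top_of_le_ne_top hfin (Td_le_Tu_succ k)
    have hTu : Tu X c k ≠ ⊤ := ne_top_of_le_ne_top hTd (Tu_le_Td k)
    obtain ⟨n, t, hmono, hmem, hsum⟩ := ih hTu (ε/2) (by linarith)
    have hSKeq : SK X c k = sSup (X '' Icc (AK X c k) (BK X c k)) := rfl
    have hIKeq : IK X c k = sInf (X '' Icc (BK X c k) (AK X c (k+1))) := rfl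
    obtain ⟨y, hy, hylt⟩ := exists_lt_of_lt_csSup
      (⟨X (AK X c k), AK X c k, ⟨le_rfl, AK_le_BK hTd⟩, rfl⟩ :
        (X '' Icc (AK X c k) (BK X c k)).Nonempty)
      (show SK X c k - ε/8 < sSup (X '' Icc (AK X c k) (BK X c k)) by
        rw [← hSKeq]; linarith)
    obtain ⟨p, hp, rfl⟩ := hy
    obtain ⟨z, hz, hzlt⟩ := exists_lt_of_csInf_lt
      (⟨X (BK X c k), BK X c k, ⟨le_rfl, BK_le_AK_succ hfin⟩, rfl⟩ :
        (X '' Icc (BK X c k) (AK X c (k+1))).Nonempty)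
      (show sInf (X '' Icc (BK X c k) (AK X c (k+1))) < IK X c k + ε/8 by
        rw [← hIKeq]; linarith)
    obtain ⟨q, hq, rfl⟩ := hz
    obtain ⟨t1, hm1, heq1, hend1, hconst1, hsum1⟩ :=
      extend_partition (X := X) (c := c) hmono (le_trans (hmem n).2 hp.1)
    obtain ⟨t2, hm2, heq2, hend2, hconst2, hsum2⟩ :=
      extend_partition (X := X) (c := c) (n := n+1) (p := q) hm1
        (by rw [hend1]; exact hp.2.trans hq.1)
    have hA1 : AK X c k ≤ AK X c (k+1) :=
      (ENNReal.toReal_le_toReal hTu hfin).mpr (Tu_mono (Nat.le_succ k))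
    have hBA : BK X c k ≤ AK X c (k+1) := BK_le_AK_succ hfin
    have hAK0 : (0:ℝ) ≤ AK X c k := ENNReal.toReal_nonneg
    refine ⟨n+2, t2, hm2, ?_, ?_⟩
    · intro i
      rcases lt_trichotomy i (n+1) with hi | rfl | hi
      · have hi' : i ≤ n := by omega
        rw [heq2 i (by omega), heq1 i hi']
        exact ⟨(hmem i).1, (hmem i).2.trans hA1⟩
      · rw [heq2 (n+1) le_rfl, hend1]
        exact ⟨hAK0.trans hp.1, hp.2.trans hBA⟩
      · rw [hconst2 i (by omega)]
        exact ⟨le_trans hAK0 (hp.1.trans (hp.2.trans hq.1)), hq.2⟩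
    · have e2 : t2 (n+1+1) = q := hend2
      have hX2 : X (t2 (n+2)) = X q := by rw [show n+2 = n+1+1 from rfl, hend2]
      rw [show n+2 = n+1+1 from rfl, hsum2, hend1, hsum1, hX2]
      have a1 : X p - X (t n) ≤ |X p - X (t n)| := le_abs_self _
      have a2 : X p - X q ≤ |X q - X p| := by rw [abs_sub_comm]; exact le_abs_self _
      have hg := G_succ (X := X) (c := c) k
      rw [hg]
      linarith
/-! ### the right inequality -/

lemma right_ineq (hX : Cadlag X) (hc : 0 < c) {T : ℝ} (hT : 0 < T) :
    eVariationOn (Xc X c) (Icc 0 T) ≤ TVtrunc X (2*c) T + ENNReal.ofReal (2*c) := by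
  have hgm : ∀ ⦃s t : ℝ⦄, 0 ≤ s → s ≤ t → gfun X c s ≤ gfun X c t :=
    fun s t hs hst => g_mono hX hc hs hst
  have hhm : ∀ ⦃s t : ℝ⦄, 0 ≤ s → s ≤ t → hfun X c s ≤ hfun X c t :=
    fun s t hs hst => h_mono hX hc hs hst
  have hfgh : ∀ s : ℝ, Xc X c s = gfun X c s - hfun X c s := fun s => by rw [hfun]; ring
  refine le_trans (eVar_le_jordan hT.le hgm hhm hfgh) ?_
  have hgd : 0 ≤ gfun X c T - gfun X c 0 := by have := hgm le_rfl hT.le; linarith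
  have hhd : 0 ≤ hfun X c T - hfun X c 0 := by have := hhm le_rfl hT.le; linarith
  rw [← ENNReal.ofReal_add hgd hhd]
  refine ENNReal.le_of_forall_pos_le_add fun ε hε hlt => ?_
  have hε' : (0:ℝ) < ε := by exact_mod_cast hε
  suffices hS : ∃ n, ∃ t : ℕ → ℝ, Monotone t ∧ (∀ i, t i ∈ Icc 0 T) ∧
      (gfun X c T - gfun X c 0) + (hfun X c T - hfun X c 0) - 2*c - ε ≤ rSum X c n t by
    obtain ⟨n, t, h1, h2, h3⟩ := hS
    calc ENNReal.ofReal ((gfun X c T - gfun X c 0) + (hfun X c T - hfun X c 0))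
        ≤ ENNReal.ofReal (rSum X c n t + 2*c + (ε:ℝ)) :=
          ENNReal.ofReal_le_ofReal (by linarith)
      _ ≤ ENNReal.ofReal (rSum X c n t + 2*c) + ENNReal.ofReal (ε:ℝ) :=
          ENNReal.ofReal_add_le
      _ ≤ ENNReal.ofReal (rSum X c n t) + ENNReal.ofReal (2*c) + ENNReal.ofReal (ε:ℝ) :=
          add_le_add_left ENNReal.ofReal_add_le _
      _ ≤ TVtrunc X (2*c) T + ENNReal.ofReal (2*c) + ε := by
          refine add_le_add (add_le_add (rSum_le_TV n t h1 h2) le_rfl) ?_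
          rw [ENNReal.ofReal_coe_nnreal]
  obtain ⟨j0, hj0⟩ := bj_cover hX hc (le_refl (0:ℝ))
  have hfin0 : stt X c j0 ≠ ⊤ := ne_top_of_le_ne_top ENNReal.ofReal_ne_top hj0.1
  have hbase : -X 0 ≤ gfun X c 0 + hfun X c 0 := by
    have e1 : U X c 0 ≤ U X c j0 := U_mono hX hc (Nat.zero_le j0) hfin0
    have e2 : Uh X c 0 ≤ Uh X c j0 := Uh_mono hX hc (Nat.zero_le j0) hfin0
    have e3 := g_lb hX hc le_rfl hj0
    have e4 := h_lb hX hc le_rfl hj0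
    have eU : U X c 0 = 0 := rfl
    have eUh : Uh X c 0 = -X 0 := rfl
    rw [eU] at e1; rw [eUh] at e2
    linarith
  obtain ⟨jT, hjT⟩ := bj_cover hX hc hT.le
  rcases nat_tri jT with rfl | ⟨k, rfl⟩ | ⟨k, rfl⟩
  · have hi := bj_init' hjT
    have h0T : ENNReal.ofReal (0:ℝ) < Tu X c 0 :=
      lt_of_le_of_lt (ENNReal.ofReal_le_ofReal hT.le) hi
    refine ⟨0, fun _ => 0, monotone_const, fun i => ⟨le_rfl, hT.le⟩, ?_⟩
    have h0 : rSum X c 0 (fun _ => 0) = 0 := by simp [rSum]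
    rw [h0, g_init hi, h_init hi, g_init h0T, h_init h0T]
    linarith
  · obtain ⟨h1, h2⟩ := bj_up' hjT
    have hTu : Tu X c k ≠ ⊤ := ne_top_of_le_ne_top ENNReal.ofReal_ne_top h1
    obtain ⟨n, t, hmono, hmem, hsum⟩ := inv_partition hX hc k hTu (ε/2) (by linarith)
    have hAT : AK X c k ≤ T := AK_le_of_bj hT.le h1
    have hσeq : supOn X (AK X c k) T = sSup (X '' Icc (AK X c k) T) := rfl
    obtain ⟨y, hy, hylt⟩ := exists_lt_of_lt_csSup
      (⟨X (AK X c k), AK X c k, ⟨le_rfl, hAT⟩, rfl⟩ : (X '' Icc (AK X c k) T).Nonempty)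
      (show supOn X (AK X c k) T - ε/2 < sSup (X '' Icc (AK X c k) T) by
        rw [← hσeq]; linarith)
    obtain ⟨p, hp, rfl⟩ := hy
    obtain ⟨t1, hm1, heq1, hend1, hconst1, hsum1⟩ :=
      extend_partition (X := X) (c := c) hmono (le_trans (hmem n).2 hp.1)
    refine ⟨n+1, t1, hm1, ?_, ?_⟩
    · intro i
      rcases le_or_gt i n with hi | hi
      · rw [heq1 i hi]; exact ⟨(hmem i).1, (hmem i).2.trans hAT⟩
      · rw [hconst1 i (by omega)]
        exact ⟨le_trans ENNReal.toReal_nonneg hp.1, hp.2⟩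
    · rw [hsum1, g_up h1 h2, h_up hX hc h1 h2]
      have a1 : X p - X (t n) ≤ |X p - X (t n)| := le_abs_self _
      have hG0 : G X c 0 = X (AK X c 0) - X 0 - c := rfl
      linarith [hsum, hbase, hylt, a1]
  · obtain ⟨h1, h2⟩ := bj_down' hjT
    have hTd : Td X c k ≠ ⊤ := ne_top_of_le_ne_top ENNReal.ofReal_ne_top h1
    have hTu : Tu X c k ≠ ⊤ := ne_top_of_le_ne_top hTd (Tu_le_Td k)
    obtain ⟨n, t, hmono, hmem, hsum⟩ := inv_partition hX hc k hTu (ε/4) (by linarith)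
    have hBT : BK X c k ≤ T := BK_le_of_bj hT.le h1
    have hABk : AK X c k ≤ BK X c k := AK_le_BK hTd
    have hSKeq : SK X c k = sSup (X '' Icc (AK X c k) (BK X c k)) := rfl
    obtain ⟨y, hy, hylt⟩ := exists_lt_of_lt_csSup
      (⟨X (AK X c k), AK X c k, ⟨le_rfl, hABk⟩, rfl⟩ :
        (X '' Icc (AK X c k) (BK X c k)).Nonempty)
      (show SK X c k - ε/4 < sSup (X '' Icc (AK X c k) (BK X c k)) by
        rw [← hSKeq]; linarith)
    obtain ⟨p, hp, rfl⟩ := hy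
    have hιeq : infOn X (BK X c k) T = sInf (X '' Icc (BK X c k) T) := rfl
    obtain ⟨z, hz, hzlt⟩ := exists_lt_of_csInf_lt
      (⟨X (BK X c k), BK X c k, ⟨le_rfl, hBT⟩, rfl⟩ : (X '' Icc (BK X c k) T).Nonempty)
      (show sInf (X '' Icc (BK X c k) T) < infOn X (BK X c k) T + ε/4 by
        rw [← hιeq]; linarith)
    obtain ⟨q, hq, rfl⟩ := hz
    obtain ⟨t1, hm1, heq1, hend1, hconst1, hsum1⟩ :=
      extend_partition (X := X) (c := c) hmono (le_trans (hmem n).2 hp.1)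
    obtain ⟨t2, hm2, heq2, hend2, hconst2, hsum2⟩ :=
      extend_partition (X := X) (c := c) (n := n+1) (p := q) hm1
        (by rw [hend1]; exact hp.2.trans hq.1)
    refine ⟨n+2, t2, hm2, ?_, ?_⟩
    · intro i
      rcases lt_trichotomy i (n+1) with hi | rfl | hi
      · have hi' : i ≤ n := by omega
        rw [heq2 i (by omega), heq1 i hi']
        exact ⟨(hmem i).1, (hmem i).2.trans (hABk.trans hBT)⟩
      · rw [heq2 (n+1) le_rfl, hend1]
        exact ⟨le_trans ENNReal.toReal_nonneg hp.1, hp.2.trans hBT⟩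
      · rw [hconst2 i (by omega)]
        exact ⟨le_trans ENNReal.toReal_nonneg (hABk.trans hq.1), hq.2⟩
    · rw [show n+2 = n+1+1 from rfl, hsum2, hend1, hsum1, g_down h1 h2, h_down hX hc h1 h2]
      have a1 : X p - X (t n) ≤ |X p - X (t n)| := le_abs_self _
      have a2 : X p - X q ≤ |X q - X p| := by rw [abs_sub_comm]; exact le_abs_self _
      have hG0 : G X c 0 = X (AK X c 0) - X 0 - c := rfl
      linarith [hsum, hbase, hylt, hzlt, a1, a2]

end Stmt6Aux

/-- two-sided estimate for the total variation of `X^c`: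
`TV^{2c}(X,T) ≤ TV(X^c,T) ≤ TV^{2c}(X,T) + 2c`. -/
theorem stmt_6 (X : ℝ → ℝ) (hX : Cadlag X) (c : ℝ) (hc : 0 < c)
    (hud : Tu X c 0 ≤ TdIni X c) (T : ℝ) (hT : 0 < T) :
    TVtrunc X (2 * c) T ≤ eVariationOn (Xc X c) (Icc 0 T) ∧
    eVariationOn (Xc X c) (Icc 0 T) ≤ TVtrunc X (2 * c) T + ENNReal.ofReal (2 * c) :=
  ⟨Stmt6Aux.left_ineq hX hc hud T, Stmt6Aux.right_ineq hX hc hT⟩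

end
end

section
/- For any c > 0 and any càdlàg function X, the upward and downward truncated variations satisfy the decomposition TV^c(X,T) = UTV^c(X,T) + DTV^c(X,T), where UTV^c(X,T) = sup_n sup_{0≤t_1<...<t_n≤T} Σ max{X(t_i) − X(t_{i−1}) − c, 0}, DTV^c(X,T) = sup_n sup_{0≤t_1<...<t_n≤T} Σ max{X(t_{i−1}) − X(t_i) − c, 0}, and TV^c(X,T) = sup_n sup Σ max{|X(t_i) − X(t_{i−1})| − c, 0}. -/
open Set Filter MeasureTheory
open scoped ENNReal NNReal Topology

noncomputable section

/-! ### Auxiliary machinery for `stmt_7` -/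

private def psum (f : ℝ → ℝ) (c : ℝ) (n : ℕ) (t : ℕ → ℝ) : ℝ≥0∞ :=
  ∑ i ∈ Finset.range n, ENNReal.ofReal (f (t (i + 1)) - f (t i) - c)

private lemma psum_succ (f : ℝ → ℝ) (c : ℝ) (n : ℕ) (t : ℕ → ℝ) :
    psum f c (n + 1) t = psum f c n t + ENNReal.ofReal (f (t (n + 1)) - f (t n) - c) :=
  Finset.sum_range_succ _ _

private lemma psum_neg_succ (f : ℝ → ℝ) (c : ℝ) (n : ℕ) (t : ℕ → ℝ) :
    psum (fun x => -f x) c (n + 1) t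
      = psum (fun x => -f x) c n t + ENNReal.ofReal (f (t n) - f (t (n + 1)) - c) := by
  rw [psum_succ]
  congr 1
  show ENNReal.ofReal (-f (t (n + 1)) - -f (t n) - c) = _
  congr 1
  ring

private lemma psum_congr {f : ℝ → ℝ} {c : ℝ} {n : ℕ} {t t' : ℕ → ℝ}
    (h : ∀ i ≤ n, t i = t' i) : psum f c n t = psum f c n t' :=
  Finset.sum_congr rfl fun i hi => by
    have hi' := Finset.mem_range.mp hi
    rw [h i (by omega), h (i + 1) (by omega)]

private lemma sum_le_tv (f : ℝ → ℝ) (c R : ℝ) {n : ℕ} {t : ℕ → ℝ} (hm : Monotone t)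
    (hmem : ∀ i, t i ∈ Icc (0 : ℝ) R) :
    (∑ i ∈ Finset.range n, ENNReal.ofReal (|f (t (i + 1)) - f (t i)| - c))
      ≤ TVtrunc f c R := by
  unfold TVtrunc
  exact le_iSup_of_le n (le_iSup_of_le t (le_iSup_of_le hm (le_iSup_of_le hmem le_rfl)))

private lemma psum_le_tv (f : ℝ → ℝ) (c R : ℝ) {n : ℕ} {t : ℕ → ℝ} (hm : Monotone t)
    (hmem : ∀ i, t i ∈ Icc (0 : ℝ) R) : psum f c n t ≤ TVtrunc f c R := by
  refine le_trans (Finset.sum_le_sum fun i _ => ?_) (sum_le_tv f c R hm hmem)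
  exact ENNReal.ofReal_le_ofReal (sub_le_sub_right (le_abs_self _) c)

private lemma tv_neg (f : ℝ → ℝ) (c R : ℝ) :
    TVtrunc (fun x => -f x) c R = TVtrunc f c R := by
  unfold TVtrunc
  refine iSup_congr fun n => iSup_congr fun t => iSup_congr fun _ => iSup_congr fun _ => ?_
  refine Finset.sum_congr rfl fun i _ => ?_
  congr 1
  have h : -f (t (i + 1)) - -f (t i) = -(f (t (i + 1)) - f (t i)) := by ring
  show |(-f (t (i + 1))) - -f (t i)| - c = _
  rw [h, abs_neg]

private lemma single_le_tv (f : ℝ → ℝ) (c : ℝ) {p q R : ℝ} (hp : 0 ≤ p) (hpq : p ≤ q)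
    (hqR : q ≤ R) : ENNReal.ofReal (|f q - f p| - c) ≤ TVtrunc f c R := by
  have h := sum_le_tv f c R (n := 1) (t := fun i => if i = 0 then p else q) ?_ ?_
  · simpa using h
  · intro i j hij
    by_cases hi : i = 0
    · by_cases hj : j = 0
      · simp [hi, hj]
      · simp only [hi, hj, if_pos rfl, if_neg hj]
        exact hpq
    · have hj : ¬ j = 0 := by omega
      simp [hi, hj]
  · intro i
    by_cases hi : i = 0
    · simp only [hi, if_pos rfl]
      exact ⟨hp, hpq.trans hqR⟩
    · simp only [if_neg hi]
      exact ⟨hp.trans hpq, hqR⟩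

private lemma superadd (f : ℝ → ℝ) (c : ℝ) {r p q R : ℝ} (hr : 0 ≤ r) (hrp : r ≤ p)
    (hpq : p ≤ q) (hqR : q ≤ R) :
    TVtrunc f c r + ENNReal.ofReal (|f q - f p| - c) ≤ TVtrunc f c R := by
  have hx : ENNReal.ofReal (|f q - f p| - c) ≤ TVtrunc f c R :=
    single_le_tv f c (hr.trans hrp) hpq hqR
  conv_lhs => rw [TVtrunc]
  rw [ENNReal.iSup_add]
  refine iSup_le fun n => ?_
  rw [ENNReal.iSup_add]
  refine iSup_le fun t => ?_
  rcases Classical.em (Monotone t) with hm | hm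
  swap
  · rw [iSup_neg hm]
    simpa using hx
  rw [iSup_pos hm]
  rcases Classical.em (∀ i, t i ∈ Icc (0 : ℝ) r) with hmem | hmem
  swap
  · rw [iSup_neg hmem]
    simpa using hx
  rw [iSup_pos hmem]
  set t' : ℕ → ℝ := fun i => if i ≤ n then t i else if i = n + 1 then p else q with ht'
  have htr : r ≤ R := hrp.trans (hpq.trans hqR)
  have ht'mem : ∀ i, t' i ∈ Icc (0 : ℝ) R := by
    intro i
    by_cases hi : i ≤ n
    · simp only [ht', if_pos hi]
      exact ⟨(hmem i).1, (hmem i).2.trans htr⟩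
    · by_cases hi2 : i = n + 1
      · simp only [ht', if_neg hi, if_pos hi2]
        exact ⟨hr.trans hrp, hpq.trans hqR⟩
      · simp only [ht', if_neg hi, if_neg hi2]
        exact ⟨hr.trans (hrp.trans hpq), hqR⟩
  have ht'm : Monotone t' := by
    intro i j hij
    by_cases hi : i ≤ n
    · by_cases hj : j ≤ n
      · simp only [ht', if_pos hi, if_pos hj]
        exact hm hij
      · have h1 : t i ≤ p := (hmem i).2.trans hrp
        by_cases hj2 : j = n + 1
        · simp only [ht', if_pos hi, if_neg hj, if_pos hj2]
          exact h1
        · simp only [ht', if_pos hi, if_neg hj, if_neg hj2]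
          exact h1.trans hpq
    · have hj : ¬ j ≤ n := by omega
      by_cases hi2 : i = n + 1
      · by_cases hj2 : j = n + 1
        · simp only [ht', if_neg hi, if_neg hj, if_pos hi2, if_pos hj2]
          exact le_rfl
        · simp only [ht', if_neg hi, if_neg hj, if_pos hi2, if_neg hj2]
          exact hpq
      · have hj2 : ¬ j = n + 1 := by omega
        simp only [ht', if_neg hi, if_neg hj, if_neg hi2, if_neg hj2]
        exact le_rfl
  refine le_trans ?_ (sum_le_tv f c R (n := n + 2) ht'm ht'mem)
  rw [Finset.sum_range_succ, Finset.sum_range_succ]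
  have e1 : ∀ i ∈ Finset.range n,
      ENNReal.ofReal (|f (t' (i + 1)) - f (t' i)| - c)
        = ENNReal.ofReal (|f (t (i + 1)) - f (t i)| - c) := by
    intro i hi
    have hi' := Finset.mem_range.mp hi
    simp only [ht']
    rw [if_pos (by omega : i ≤ n), if_pos (by omega : i + 1 ≤ n)]
  rw [Finset.sum_congr rfl e1]
  have e2 : t' (n + 1) = p := by
    simp only [ht']
    rw [if_neg (by omega)]
    simp
  have e3 : t' (n + 1 + 1) = q := by
    simp only [ht']
    rw [if_neg (by omega), if_neg (by omega)]
  have e4 : t' n = t n := by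
    simp only [ht']
    rw [if_pos le_rfl]
  rw [e2, e3, e4]
  exact add_le_add (le_add_right le_rfl) le_rfl

private lemma key (c : ℝ) : ∀ N : ℕ, ∀ f : ℝ → ℝ, ∀ R : ℝ, 0 ≤ R → ∀ n m : ℕ,
    n + m ≤ N → ∀ s u : ℕ → ℝ, Monotone s → Monotone u →
    (∀ i, s i ∈ Icc (0 : ℝ) R) → (∀ i, u i ∈ Icc (0 : ℝ) R) →
    psum f c n s + psum (fun x => -f x) c m u ≤ TVtrunc f c R := by
  intro N
  induction N with
  | zero =>
    intro f R hR n m hnm s u hs hu hsR huR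
    have hn : n = 0 := by omega
    have hm : m = 0 := by omega
    subst hn; subst hm
    simp [psum]
  | succ N IH =>
    intro f R hR n m hnm s u hs hu hsR huR
    have core : ∀ f : ℝ → ℝ, ∀ R : ℝ, 0 ≤ R → ∀ k l : ℕ, k + 1 + (l + 1) ≤ N + 1 →
        ∀ s u : ℕ → ℝ, Monotone s → Monotone u →
        (∀ i, s i ∈ Icc (0 : ℝ) R) → (∀ i, u i ∈ Icc (0 : ℝ) R) →
        0 < f (s (k + 1)) - f (s k) - c → 0 < f (u l) - f (u (l + 1)) - c →
        s (k + 1) ≤ u (l + 1) →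
        psum f c (k + 1) s + psum (fun x => -f x) c (l + 1) u ≤ TVtrunc f c R := by
      clear hnm hs hu hsR huR hR s u f R n m
      intro f R hR k l hN s u hs hu hsR huR hA hB hord
      rcases le_or_gt (s (k + 1)) (u l) with hbp | hbp
      · -- the last down interval is to the right of everything else
        have h0p : 0 ≤ u l := (huR l).1
        have hIH := IH f (u l) h0p (k + 1) l (by omega)
          (fun i => s (min i (k + 1))) (fun i => u (min i l))
          (hs.comp fun i j h => min_le_min h le_rfl)
          (hu.comp fun i j h => min_le_min h le_rfl)
          (fun i => ⟨(hsR _).1, (hs (min_le_right i (k + 1))).trans hbp⟩)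
          (fun i => ⟨(huR _).1, hu (min_le_right i l)⟩)
        have e1 : psum f c (k + 1) (fun i => s (min i (k + 1))) = psum f c (k + 1) s :=
          psum_congr fun i hi => by rw [min_eq_left hi]
        have e2 : psum (fun x => -f x) c l (fun i => u (min i l))
            = psum (fun x => -f x) c l u :=
          psum_congr fun i hi => by rw [min_eq_left hi]
        rw [e1, e2] at hIH
        calc psum f c (k + 1) s + psum (fun x => -f x) c (l + 1) u
            = (psum f c (k + 1) s + psum (fun x => -f x) c l u)
              + ENNReal.ofReal (f (u l) - f (u (l + 1)) - c) := by
              rw [psum_neg_succ]; ring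
          _ ≤ TVtrunc f c (u l) + ENNReal.ofReal (|f (u (l + 1)) - f (u l)| - c) := by
              refine add_le_add hIH (ENNReal.ofReal_le_ofReal ?_)
              have h := neg_le_abs (f (u (l + 1)) - f (u l))
              linarith
          _ ≤ TVtrunc f c R := superadd f c h0p le_rfl (hu (Nat.le_succ l)) (huR (l + 1)).2
      · -- the last down interval overlaps the ups
        have h0b : 0 ≤ s (k + 1) := (hsR _).1
        have hqR : u (l + 1) ≤ R := (huR _).2
        have hsup : TVtrunc f c (s (k + 1))
            + ENNReal.ofReal (f (s (k + 1)) - f (u (l + 1)) - c) ≤ TVtrunc f c R := by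
          refine le_trans (add_le_add_right (ENNReal.ofReal_le_ofReal ?_) _)
            (superadd f c h0b le_rfl hord hqR)
          have h := neg_le_abs (f (u (l + 1)) - f (s (k + 1)))
          linarith
        have hval : ENNReal.ofReal (f (s (k + 1)) - f (s k) - c)
            + ENNReal.ofReal (f (u l) - f (u (l + 1)) - c)
            ≤ ENNReal.ofReal (f (u l) - f (s k) - c)
              + ENNReal.ofReal (f (s (k + 1)) - f (u (l + 1)) - c) := by
          rw [← ENNReal.ofReal_add hA.le hB.le]
          rw [show f (s (k + 1)) - f (s k) - c + (f (u l) - f (u (l + 1)) - c)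
              = (f (u l) - f (s k) - c) + (f (s (k + 1)) - f (u (l + 1)) - c) by ring]
          exact ENNReal.ofReal_add_le
        rcases le_or_gt (s k) (u l) with hap | hap
        · -- partial overlap: append `u l` to the ups, drop the last down
          set s'' : ℕ → ℝ := fun i => if i < k + 1 then s i else u l with hs''def
          have hs''m : Monotone s'' := by
            intro i j hij
            by_cases hi : i < k + 1
            · by_cases hj : j < k + 1
              · simp only [hs''def, if_pos hi, if_pos hj]
                exact hs hij
              · simp only [hs''def, if_pos hi, if_neg hj]
                exact (hs (by omega : i ≤ k)).trans hap
            · have hj : ¬ j < k + 1 := by omega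
              simp only [hs''def, if_neg hi, if_neg hj]
              exact le_rfl
          have hs''mem : ∀ i, s'' i ∈ Icc (0 : ℝ) (s (k + 1)) := by
            intro i
            by_cases hi : i < k + 1
            · simp only [hs''def, if_pos hi]
              exact ⟨(hsR i).1, hs (by omega)⟩
            · simp only [hs''def, if_neg hi]
              exact ⟨(huR l).1, hbp.le⟩
          have hu'mem : ∀ i, u (min i l) ∈ Icc (0 : ℝ) (s (k + 1)) := fun i =>
            ⟨(huR _).1, (hu (min_le_right i l)).trans hbp.le⟩
          have hIH := IH f (s (k + 1)) h0b (k + 1) l (by omega) s'' (fun i => u (min i l))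
            hs''m (hu.comp fun i j h => min_le_min h le_rfl) hs''mem hu'mem
          have e2 : psum (fun x => -f x) c l (fun i => u (min i l))
              = psum (fun x => -f x) c l u :=
            psum_congr fun i hi => by rw [min_eq_left hi]
          rw [e2] at hIH
          have eb : ∀ i ≤ k, s'' i = s i := fun i hi => by
            simp only [hs''def]
            rw [if_pos (by omega)]
          have hps'' : psum f c (k + 1) s''
              = psum f c k s + ENNReal.ofReal (f (u l) - f (s k) - c) := by
            rw [psum_succ]
            have ea : s'' (k + 1) = u l := by
              simp only [hs''def]
              rw [if_neg (by omega)]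
            rw [psum_congr eb, ea, eb k le_rfl]
          calc psum f c (k + 1) s + psum (fun x => -f x) c (l + 1) u
              = (psum f c k s + psum (fun x => -f x) c l u)
                + (ENNReal.ofReal (f (s (k + 1)) - f (s k) - c)
                  + ENNReal.ofReal (f (u l) - f (u (l + 1)) - c)) := by
                rw [psum_succ, psum_neg_succ]; ring
            _ ≤ (psum f c k s + psum (fun x => -f x) c l u)
                + (ENNReal.ofReal (f (u l) - f (s k) - c)
                  + ENNReal.ofReal (f (s (k + 1)) - f (u (l + 1)) - c)) :=
                add_le_add_right hval _
            _ = (psum f c (k + 1) s'' + psum (fun x => -f x) c l u)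
                + ENNReal.ofReal (f (s (k + 1)) - f (u (l + 1)) - c) := by
                rw [hps'']; ring
            _ ≤ TVtrunc f c (s (k + 1))
                + ENNReal.ofReal (f (s (k + 1)) - f (u (l + 1)) - c) :=
                add_le_add_left hIH _
            _ ≤ TVtrunc f c R := hsup
        · -- the last up is nested in the last down: append `s k` to the downs, drop last up
          set u'' : ℕ → ℝ := fun i => if i < l + 1 then u i else s k with hu''def
          have hu''m : Monotone u'' := by
            intro i j hij
            by_cases hi : i < l + 1
            · by_cases hj : j < l + 1
              · simp only [hu''def, if_pos hi, if_pos hj]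
                exact hu hij
              · simp only [hu''def, if_pos hi, if_neg hj]
                exact (hu (by omega : i ≤ l)).trans hap.le
            · have hj : ¬ j < l + 1 := by omega
              simp only [hu''def, if_neg hi, if_neg hj]
              exact le_rfl
          have hu''mem : ∀ i, u'' i ∈ Icc (0 : ℝ) (s (k + 1)) := by
            intro i
            by_cases hi : i < l + 1
            · simp only [hu''def, if_pos hi]
              exact ⟨(huR i).1, ((hu (by omega : i ≤ l)).trans hap.le).trans (hs (Nat.le_succ k))⟩
            · simp only [hu''def, if_neg hi]
              exact ⟨(hsR k).1, hs (Nat.le_succ k)⟩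
          have hs'mem : ∀ i, s (min i k) ∈ Icc (0 : ℝ) (s (k + 1)) := fun i =>
            ⟨(hsR _).1, hs ((min_le_right i k).trans (Nat.le_succ k))⟩
          have hIH := IH f (s (k + 1)) h0b k (l + 1) (by omega) (fun i => s (min i k)) u''
            (hs.comp fun i j h => min_le_min h le_rfl) hu''m hs'mem hu''mem
          have e1 : psum f c k (fun i => s (min i k)) = psum f c k s :=
            psum_congr fun i hi => by rw [min_eq_left hi]
          rw [e1] at hIH
          have eb : ∀ i ≤ l, u'' i = u i := fun i hi => by
            simp only [hu''def]
            rw [if_pos (by omega)]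
          have hpu'' : psum (fun x => -f x) c (l + 1) u''
              = psum (fun x => -f x) c l u + ENNReal.ofReal (f (u l) - f (s k) - c) := by
            rw [psum_neg_succ]
            have ea : u'' (l + 1) = s k := by
              simp only [hu''def]
              rw [if_neg (by omega)]
            rw [psum_congr eb, ea, eb l le_rfl]
          calc psum f c (k + 1) s + psum (fun x => -f x) c (l + 1) u
              = (psum f c k s + psum (fun x => -f x) c l u)
                + (ENNReal.ofReal (f (s (k + 1)) - f (s k) - c)
                  + ENNReal.ofReal (f (u l) - f (u (l + 1)) - c)) := by
                rw [psum_succ, psum_neg_succ]; ring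
            _ ≤ (psum f c k s + psum (fun x => -f x) c l u)
                + (ENNReal.ofReal (f (u l) - f (s k) - c)
                  + ENNReal.ofReal (f (s (k + 1)) - f (u (l + 1)) - c)) :=
                add_le_add_right hval _
            _ = (psum f c k s + psum (fun x => -f x) c (l + 1) u'')
                + ENNReal.ofReal (f (s (k + 1)) - f (u (l + 1)) - c) := by
                rw [hpu'']; ring
            _ ≤ TVtrunc f c (s (k + 1))
                + ENNReal.ofReal (f (s (k + 1)) - f (u (l + 1)) - c) :=
                add_le_add_left hIH _
            _ ≤ TVtrunc f c R := hsup
    -- main case analysis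
    rcases Nat.eq_zero_or_pos n with hn0 | hn0
    · subst hn0
      have h0 : psum f c 0 s = 0 := Finset.sum_range_zero _
      rw [h0, zero_add, ← tv_neg f c R]
      exact psum_le_tv _ c R hu huR
    rcases Nat.eq_zero_or_pos m with hm0 | hm0
    · subst hm0
      have h0 : psum (fun x => -f x) c 0 u = 0 := Finset.sum_range_zero _
      rw [h0, add_zero]
      exact psum_le_tv f c R hs hsR
    obtain ⟨k, rfl⟩ : ∃ k, n = k + 1 := ⟨n - 1, by omega⟩
    obtain ⟨l, rfl⟩ : ∃ l, m = l + 1 := ⟨m - 1, by omega⟩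
    rcases le_or_gt (f (s (k + 1)) - f (s k) - c) 0 with hA | hA
    · rw [psum_succ f c k s, ENNReal.ofReal_eq_zero.mpr hA, add_zero]
      exact IH f R hR k (l + 1) (by omega) s u hs hu hsR huR
    rcases le_or_gt (f (u l) - f (u (l + 1)) - c) 0 with hB | hB
    · rw [psum_neg_succ f c l u, ENNReal.ofReal_eq_zero.mpr hB, add_zero]
      exact IH f R hR (k + 1) l (by omega) s u hs hu hsR huR
    rcases le_total (s (k + 1)) (u (l + 1)) with hord | hord
    · exact core f R hR k l hnm s u hs hu hsR huR hA hB hord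
    · have h1 := core (fun x => -f x) R hR l k (by omega) u s hu hs huR hsR
        (by show 0 < -f (u (l + 1)) - -f (u l) - c; linarith)
        (by show 0 < -f (s k) - -f (s (k + 1)) - c; linarith)
        hord
      rw [tv_neg] at h1
      have e : psum (fun x => -(fun y => -f y) x) c (k + 1) s = psum f c (k + 1) s :=
        Finset.sum_congr rfl fun i _ => by
          congr 1
          show -(-f (s (i + 1))) - -(-f (s i)) - c = _
          ring
      rw [e] at h1
      exact le_trans (le_of_eq (add_comm _ _)) h1

private lemma ofReal_abs_split {c : ℝ} (hc : 0 ≤ c) (x : ℝ) :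
    ENNReal.ofReal (|x| - c) = ENNReal.ofReal (x - c) + ENNReal.ofReal (-x - c) := by
  rcases le_total 0 x with h | h
  · rw [abs_of_nonneg h, ENNReal.ofReal_of_nonpos (by linarith : -x - c ≤ 0), add_zero]
  · rw [abs_of_nonpos h, ENNReal.ofReal_of_nonpos (by linarith : x - c ≤ 0), zero_add]

/-- Jordan-type decomposition of the truncated variation:
`TV^c = UTV^c + DTV^c`. -/
theorem stmt_7 (X : ℝ → ℝ) (hX : Cadlag X) (c : ℝ) (hc : 0 ≤ c) (T : ℝ) (hT : 0 ≤ T) :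
    TVtrunc X c T = UTVtrunc X c T + DTVtrunc X c T := by
  refine le_antisymm ?_ ?_
  · -- `TV ≤ UTV + DTV`
    refine iSup_le fun n => iSup_le fun t => iSup_le fun hm => iSup_le fun hmem => ?_
    have hsplit : (∑ i ∈ Finset.range n, ENNReal.ofReal (|X (t (i + 1)) - X (t i)| - c))
        = (∑ i ∈ Finset.range n, ENNReal.ofReal (X (t (i + 1)) - X (t i) - c))
          + ∑ i ∈ Finset.range n, ENNReal.ofReal (X (t i) - X (t (i + 1)) - c) := by
      rw [← Finset.sum_add_distrib]
      refine Finset.sum_congr rfl fun i _ => ?_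
      rw [ofReal_abs_split hc (X (t (i + 1)) - X (t i))]
      congr 2
      ring
    rw [hsplit]
    have h1 : (∑ i ∈ Finset.range n, ENNReal.ofReal (X (t (i + 1)) - X (t i) - c))
        ≤ UTVtrunc X c T := by
      unfold UTVtrunc
      exact le_iSup_of_le n (le_iSup_of_le t (le_iSup_of_le hm (le_iSup_of_le hmem le_rfl)))
    have h2 : (∑ i ∈ Finset.range n, ENNReal.ofReal (X (t i) - X (t (i + 1)) - c))
        ≤ DTVtrunc X c T := by
      unfold DTVtrunc
      exact le_iSup_of_le n (le_iSup_of_le t (le_iSup_of_le hm (le_iSup_of_le hmem le_rfl)))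
    exact add_le_add h1 h2
  · -- `UTV + DTV ≤ TV`
    haveI hne : Nonempty {p : ℕ × (ℕ → ℝ) // Monotone p.2 ∧ ∀ i, p.2 i ∈ Icc (0 : ℝ) T} :=
      ⟨⟨⟨0, fun _ => 0⟩, monotone_const, fun _ => ⟨le_rfl, hT⟩⟩⟩
    have hU : UTVtrunc X c T
        ≤ ⨆ p : {p : ℕ × (ℕ → ℝ) // Monotone p.2 ∧ ∀ i, p.2 i ∈ Icc (0 : ℝ) T},
            psum X c p.1.1 p.1.2 := by
      refine iSup_le fun n => iSup_le fun t => iSup_le fun hm => iSup_le fun hmem => ?_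
      exact le_iSup_of_le ⟨⟨n, t⟩, hm, hmem⟩ le_rfl
    have hD : DTVtrunc X c T
        ≤ ⨆ p : {p : ℕ × (ℕ → ℝ) // Monotone p.2 ∧ ∀ i, p.2 i ∈ Icc (0 : ℝ) T},
            psum (fun x => -X x) c p.1.1 p.1.2 := by
      refine iSup_le fun n => iSup_le fun t => iSup_le fun hm => iSup_le fun hmem => ?_
      refine le_iSup_of_le ⟨⟨n, t⟩, hm, hmem⟩ (le_of_eq ?_)
      refine Finset.sum_congr rfl fun i _ => ?_
      congr 1
      show X (t i) - X (t (i + 1)) - c = -X (t (i + 1)) - -X (t i) - c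
      ring
    refine le_trans (add_le_add hU hD) ?_
    rw [ENNReal.iSup_add]
    refine iSup_le fun p => ?_
    rw [ENNReal.add_iSup]
    refine iSup_le fun q => ?_
    exact key c (p.1.1 + q.1.1) X T hT p.1.1 q.1.1 le_rfl p.1.2 q.1.2
      p.2.1 q.2.1 p.2.2 q.2.2

end
end
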